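/- arXiv:2001.02484 — 5 statements merged into one kernel-verified Lean document; each statement's English description precedes it below -/
import Mathlib

section
/- For every integer t ≥ 1, every bridgeless (2t+1)-regular class 2 multigraph G satisfies φ_c(G) > 2 + 2/(2t−1). -/
/-!
Basic theory of finite multigraphs (parallel edges allowed, no loops),
nowhere-zero `r`-flows, the circular flow number, proper edge colorings,
the chromatic index, class 1 / class 2, perfect matchings, edge cuts,
`r`-bipartitions, and the operation of adding parallel copies of a matching.
-/

/-- A finite multigraph: a finite type of vertices, a finite type of edges,
each edge having an (ordered, for reference purposes) pair of distinct endpoints.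
Parallel edges are allowed; loops are excluded. -/
structure Multigraph : Type 1 where
  V : Type
  E : Type
  vFinite : Finite V
  eFinite : Finite E
  ends : E → V × V
  no_loop : ∀ e, (ends e).1 ≠ (ends e).2

namespace Multigraph

variable (G : Multigraph)

instance : Finite G.V := G.vFinite
instance : Finite G.E := G.eFinite

/-- The first endpoint of an edge (w.r.t. the reference orientation). -/
def tail (e : G.E) : G.V := (G.ends e).1

/-- The second endpoint of an edge (w.r.t. the reference orientation). -/
def head (e : G.E) : G.V := (G.ends e).2

/-- `v` is an endpoint of the edge `e`. -/
def Inc (v : G.V) (e : G.E) : Prop := G.tail e = v ∨ G.head e = v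

open Classical in
/-- The endpoint of `e` other than `v`. -/
noncomputable def otherEnd (e : G.E) (v : G.V) : G.V :=
  if G.tail e = v then G.head e else G.tail e

/-- The degree of a vertex: the number of edges incident with it
(no loops, so no edge is counted twice). -/
noncomputable def degree (v : G.V) : ℕ := Nat.card {e : G.E // G.Inc v e}

/-- `G` is `k`-regular. -/
def IsRegular (k : ℕ) : Prop := ∀ v, G.degree v = k

/-- The maximum degree `Δ(G)`. -/
noncomputable def maxDegree : ℕ := sSup (Set.range G.degree)

/-- Two distinct edges are adjacent if they share an endpoint. -/
def EAdj (e e' : G.E) : Prop := e ≠ e' ∧ ∃ v, G.Inc v e ∧ G.Inc v e'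

/-- A proper edge coloring with `k` colors: adjacent edges get distinct colors. -/
def IsProperEdgeColoring {k : ℕ} (c : G.E → Fin k) : Prop :=
  ∀ e e', G.EAdj e e' → c e ≠ c e'

/-- The chromatic index `χ'(G)`. -/
noncomputable def chromaticIndex : ℕ :=
  sInf {k | ∃ c : G.E → Fin k, G.IsProperEdgeColoring c}

/-- `G` is class 1 if `χ'(G) = Δ(G)`. -/
def IsClass1 : Prop := G.chromaticIndex = G.maxDegree

/-- `G` is class 2 if it is not class 1. -/
def IsClass2 : Prop := ¬ G.IsClass1

/-- A nowhere-zero `r`-flow: the orientation `D` is encoded by the signs of `f`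
(a negative value means the edge is used against its reference direction), every
edge has absolute flow value in `[1, r-1]`, and Kirchhoff's law holds at every
vertex. -/
def IsNZFlow (r : ℝ) (f : G.E → ℝ) : Prop :=
  (∀ e, 1 ≤ |f e| ∧ |f e| ≤ r - 1) ∧
  ∀ v : G.V, ∑ᶠ e ∈ {e | G.tail e = v}, f e = ∑ᶠ e ∈ {e | G.head e = v}, f e

/-- `G` admits a nowhere-zero `r`-flow. -/
def HasNZFlow (r : ℝ) : Prop := ∃ f, G.IsNZFlow r f

/-- The circular flow number `φ_c(G)`, as an extended real number:
the infimum of all real `r ≥ 2` such that `G` has a nowhere-zero `r`-flow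
(`+∞` if there is no such `r`, e.g. if `G` has a bridge). -/
noncomputable def flowNumber : EReal :=
  sInf {x : EReal | ∃ r : ℝ, x = (r : EReal) ∧ 2 ≤ r ∧ G.HasNZFlow r}

/-- A perfect matching: every vertex is incident with exactly one edge of `M`. -/
def IsPerfectMatching (M : Set G.E) : Prop :=
  ∀ v, ∃! e, e ∈ M ∧ G.Inc v e

/-- `G` is bipartite: the vertices can be 2-colored with every edge bichromatic. -/
def IsBipartite : Prop :=
  ∃ s : Set G.V, ∀ e, ¬ (G.tail e ∈ s ↔ G.head e ∈ s)

/-- The edge cut `∂_G(X)`: edges with exactly one end in `X`. -/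
def cut (X : Set G.V) : Set G.E := {e | ¬ (G.tail e ∈ X ↔ G.head e ∈ X)}

/-- Add, for each `i : Fin k`, one new parallel copy of each edge of `M i`. -/
noncomputable def addEdgeFamily {k : ℕ} (M : Fin k → Set G.E) : Multigraph where
  V := G.V
  E := G.E ⊕ ((i : Fin k) × ↥(M i))
  vFinite := by infer_instance
  eFinite := by infer_instance
  ends := Sum.elim G.ends (fun p => G.ends p.2.1)
  no_loop := by
    rintro (e | ⟨i, e⟩)
    · exact G.no_loop e
    · exact G.no_loop e.1

/-- `G + kM`: add `k` new parallel copies of each edge of `M`. -/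
noncomputable def addCopies (M : Set G.E) (k : ℕ) : Multigraph :=
  G.addEdgeFamily (fun _ : Fin k => M)

/-- Delete a set of edges. -/
noncomputable def deleteEdges (M : Set G.E) : Multigraph where
  V := G.V
  E := {e : G.E // e ∉ M}
  vFinite := G.vFinite
  eFinite := by infer_instance
  ends := fun e => G.ends e.1
  no_loop := fun e => G.no_loop e.1

/-- Vertex adjacency (there is an edge between `u` and `v`). -/
def VAdj (u v : G.V) : Prop := ∃ e, G.ends e = (u, v) ∨ G.ends e = (v, u)

/-- Reachability by walks. -/
def Reach : G.V → G.V → Prop := Relation.ReflTransGen G.VAdj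

/-- `G` is connected. -/
def Connected : Prop := ∀ u v, G.Reach u v

/-- An edge is a bridge if its ends are not joined by a walk avoiding it. -/
def IsBridge (e : G.E) : Prop :=
  ¬ (G.deleteEdges {e}).Reach (G.tail e) (G.head e)

/-- `G` is bridgeless. -/
def Bridgeless : Prop := ∀ e, ¬ G.IsBridge e

/-- An `r`-bipartition of (the vertex set of) a cubic graph. -/
def IsRBipartition (r : ℝ) (B W : Set G.V) : Prop :=
  B ∪ W = Set.univ ∧ B ∩ W = ∅ ∧
  ∀ X : Set G.V,
    (r / (r - 2)) * |((X ∩ B).ncard : ℝ) - ((X ∩ W).ncard : ℝ)| ≤ ((G.cut X).ncard : ℝ)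

/-- A cubic graph `G` with a perfect matching `M` has the `M`-class-2 property
if `G + (2t-2)M` is class 2 for every integer `t ≥ 1`. -/
def MClass2Property (M : Set G.E) : Prop :=
  ∀ t : ℕ, 1 ≤ t → (G.addCopies M (2 * t - 2)).IsClass2

/-- A cubic graph `G` with a perfect matching `M` has the `M`-class-1 property
if `G + (2t-2)M` is class 1 for every integer `t ≥ 2`. -/
def MClass1Property (M : Set G.E) : Prop :=
  ∀ t : ℕ, 2 ≤ t → (G.addCopies M (2 * t - 2)).IsClass1

/-- An `r`-graph: an `r`-regular multigraph in which every odd set of vertices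
is left by at least `r` edges. -/
def IsRGraph (r : ℕ) : Prop :=
  G.IsRegular r ∧ ∀ X : Set G.V, Odd X.ncard → r ≤ (G.cut X).ncard

end Multigraph


section AuxCircFlow
open Finset
section
variable {E : Type*} [Fintype E]

lemma MG_flow_limit (P : (E → ℝ) → Prop) (hP : IsClosed {f | P f}) (b : ℝ)
    (h : ∀ n : ℕ, ∃ f : E → ℝ, (∀ e, 1 ≤ |f e| ∧ |f e| ≤ b - 1 + 1/(n+1)) ∧ P f) :
    ∃ f : E → ℝ, (∀ e, 1 ≤ |f e| ∧ |f e| ≤ b - 1) ∧ P f := by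
  classical
  set K : ℕ → Set (E → ℝ) :=
    fun n => {f | (∀ e, 1 ≤ |f e| ∧ |f e| ≤ b - 1 + 1/(n+1)) ∧ P f} with hK
  have hmono : ∀ n, K (n+1) ⊆ K n := by
    intro n f ⟨hb, hp⟩
    have hle : b - 1 + 1/(((n:ℝ)+1)+1) ≤ b - 1 + 1/((n:ℝ)+1) := by
      have h0 : (0:ℝ) < (n:ℝ)+1 := by positivity
      have : 1/(((n:ℝ)+1)+1) ≤ 1/((n:ℝ)+1) := by
        apply one_div_le_one_div_of_le <;> linarith
      linarith
    refine ⟨fun e => ⟨(hb e).1, ((hb e).2.trans (by push_cast; push_cast at hle; linarith))⟩, hp⟩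
  have hne : ∀ n, (K n).Nonempty := by
    intro n; obtain ⟨f, hf⟩ := h n; exact ⟨f, hf⟩
  have hcl : ∀ n, IsClosed (K n) := by
    intro n
    have h1 : IsClosed {f : E → ℝ | ∀ e, 1 ≤ |f e| ∧ |f e| ≤ b - 1 + 1/(n+1)} := by
      have : {f : E → ℝ | ∀ e, 1 ≤ |f e| ∧ |f e| ≤ b - 1 + 1/(n+1)} =
          ⋂ e, ({f : E → ℝ | 1 ≤ |f e|} ∩ {f | |f e| ≤ b - 1 + 1/(n+1)}) := by
        ext f; simp [Set.mem_iInter, forall_and]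
      rw [this]
      refine isClosed_iInter fun e => (IsClosed.inter ?_ ?_)
      · exact isClosed_le continuous_const ((continuous_apply e).abs)
      · exact isClosed_le ((continuous_apply e).abs) continuous_const
    exact h1.inter hP
  have hcompact : IsCompact (K 0) := by
    refine IsCompact.of_isClosed_subset
      (isCompact_univ_pi (fun e : E => isCompact_Icc (a := -(b:ℝ)) (b := b))) (hcl 0) ?_
    · intro f ⟨hb, _⟩
      intro e _
      have := hb e
      have h1 : |f e| ≤ b := by
        have : (1:ℝ)/(0+1) = 1 := by norm_num
        nlinarith [this ▸ (hb e).2]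
      rw [Set.mem_Icc]; constructor <;> [nlinarith [neg_abs_le (f e)]; nlinarith [le_abs_self (f e)]]
  obtain ⟨f, hf⟩ := IsCompact.nonempty_iInter_of_sequence_nonempty_isCompact_isClosed K hmono hne hcompact hcl
  simp only [Set.mem_iInter] at hf
  refine ⟨f, fun e => ⟨((hf 0).1 e).1, ?_⟩, (hf 0).2⟩
  have : ∀ n : ℕ, |f e| ≤ b - 1 + 1/(n+1) := fun n => ((hf n).1 e).2
  by_contra hlt
  push_neg at hlt
  obtain ⟨n, hn⟩ := exists_nat_one_div_lt (ε := |f e| - (b-1)) (by linarith)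
  have := this n
  nlinarith [hn]
end


lemma sum_eq_one_unique {α : Type*} [DecidableEq α] (s : Finset α) (g : α → ℤ)
    (h0 : ∀ x ∈ s, 0 ≤ g x) (h1 : ∑ x ∈ s, g x = 1) :
    ∃ x ∈ s, g x = 1 ∧ ∀ y ∈ s, y ≠ x → g y = 0 := by
  have hex : ∃ x ∈ s, g x ≠ 0 := by
    by_contra hno
    push_neg at hno
    rw [Finset.sum_eq_zero hno] at h1
    norm_num at h1
  obtain ⟨x, hx, hgx⟩ := hex
  have hle : g x ≤ 1 := by
    rw [← h1]
    exact Finset.single_le_sum h0 hx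
  have hge : 1 ≤ g x := lt_of_le_of_ne (h0 x hx) (Ne.symm hgx)
  have hgx1 : g x = 1 := le_antisymm hle hge
  refine ⟨x, hx, hgx1, ?_⟩
  have hrest : ∑ y ∈ s.erase x, g y = 0 := by
    have := Finset.add_sum_erase s g hx
    rw [hgx1] at this
    omega
  intro y hy hne
  have := (Finset.sum_eq_zero_iff_of_nonneg
    (fun z hz => h0 z (Finset.mem_of_mem_erase hz))).mp hrest
  exact this y (Finset.mem_erase.mpr ⟨hne, hy⟩)

lemma local_struct (t : ℕ) (ht : 1 ≤ t) {α : Type*} [DecidableEq α] (O I : Finset α)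
    (hdisj : Disjoint O I) (a : α → ℤ)
    (hcard : O.card + I.card = 2*t+1)
    (hbal : ∑ e ∈ O, a e = ∑ e ∈ I, a e)
    (hlow : ∀ e ∈ O ∪ I, 2*(t:ℤ)-1 ≤ a e) (hhigh : ∀ e ∈ O ∪ I, a e ≤ 2*(t:ℤ)+1) :
    ((O.card = t+1 ∧ (∀ e ∈ O, a e ≤ 2*(t:ℤ)) ∧ (∀ e ∈ I, 2*(t:ℤ) ≤ a e)) ∨
     (O.card = t ∧ (∀ e ∈ O, 2*(t:ℤ) ≤ a e) ∧ (∀ e ∈ I, a e ≤ 2*(t:ℤ)))) ∧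
    ((O ∪ I).filter (fun e => a e = 2*(t:ℤ))).card = 1 := by
  have hT1 : (1:ℤ) ≤ (t:ℤ) := by exact_mod_cast ht
  have hOlow : (O.card : ℤ) * (2*(t:ℤ)-1) ≤ ∑ e ∈ O, a e := by
    calc (O.card : ℤ) * (2*(t:ℤ)-1) = ∑ _e ∈ O, (2*(t:ℤ)-1) := by
          rw [Finset.sum_const, nsmul_eq_mul]
    _ ≤ _ := Finset.sum_le_sum (fun e he => hlow e (Finset.mem_union_left _ he))
  have hOhigh : ∑ e ∈ O, a e ≤ (O.card : ℤ) * (2*(t:ℤ)+1) := by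
    calc ∑ e ∈ O, a e ≤ ∑ _e ∈ O, (2*(t:ℤ)+1) :=
        Finset.sum_le_sum (fun e he => hhigh e (Finset.mem_union_left _ he))
    _ = (O.card : ℤ) * (2*(t:ℤ)+1) := by rw [Finset.sum_const, nsmul_eq_mul]
  have hIlow : (I.card : ℤ) * (2*(t:ℤ)-1) ≤ ∑ e ∈ O, a e := by
    rw [hbal]
    calc (I.card : ℤ) * (2*(t:ℤ)-1) = ∑ _e ∈ I, (2*(t:ℤ)-1) := by
          rw [Finset.sum_const, nsmul_eq_mul]
    _ ≤ _ := Finset.sum_le_sum (fun e he => hlow e (Finset.mem_union_right _ he))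
  have hIhigh : ∑ e ∈ O, a e ≤ (I.card : ℤ) * (2*(t:ℤ)+1) := by
    rw [hbal]
    calc ∑ e ∈ I, a e ≤ ∑ _e ∈ I, (2*(t:ℤ)+1) :=
        Finset.sum_le_sum (fun e he => hhigh e (Finset.mem_union_right _ he))
    _ = (I.card : ℤ) * (2*(t:ℤ)+1) := by rw [Finset.sum_const, nsmul_eq_mul]
  have hcZ : (O.card : ℤ) + (I.card : ℤ) = 2*(t:ℤ)+1 := by exact_mod_cast hcard
  have hcases : O.card = t + 1 ∨ O.card = t := by
    have h1 : (O.card:ℤ) ≤ (t:ℤ) + 1 := by nlinarith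
    have h2 : (t:ℤ) ≤ (O.card:ℤ) := by nlinarith
    omega
  rcases hcases with hOc | hOc
  · -- O.card = t+1, I.card = t
    have hIc : I.card = t := by omega
    set g : α → ℤ := fun e => if e ∈ O then a e - (2*(t:ℤ)-1) else (2*(t:ℤ)+1) - a e with hg
    have hgO : ∀ e ∈ O, g e = a e - (2*(t:ℤ)-1) := by
      intro e he; simp only [hg, he, if_true]
    have hgI : ∀ e ∈ I, g e = (2*(t:ℤ)+1) - a e := by
      intro e he
      have : e ∉ O := fun hc => (Finset.disjoint_left.mp hdisj hc) he
      simp only [hg, this, if_false]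
    have hgsum : ∑ e ∈ O ∪ I, g e = 1 := by
      rw [Finset.sum_union hdisj]
      rw [Finset.sum_congr rfl hgO, Finset.sum_congr rfl hgI]
      have e1 : ∑ x ∈ O, (a x - (2*(t:ℤ)-1)) = (∑ x ∈ O, a x) - (O.card:ℤ)*(2*(t:ℤ)-1) := by
        rw [Finset.sum_sub_distrib, Finset.sum_const, nsmul_eq_mul]
      have e2 : ∑ x ∈ I, ((2*(t:ℤ)+1) - a x) = (I.card:ℤ)*(2*(t:ℤ)+1) - ∑ x ∈ I, a x := by
        rw [Finset.sum_sub_distrib, Finset.sum_const, nsmul_eq_mul]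
      rw [e1, e2, ← hbal, hOc, hIc]
      push_cast
      ring
    have hgnn : ∀ e ∈ O ∪ I, 0 ≤ g e := by
      intro e he
      by_cases h : e ∈ O
      · rw [hgO e h]; have := hlow e he; omega
      · have heI : e ∈ I := (Finset.mem_union.mp he).resolve_left h
        rw [hgI e heI]; have := hhigh e he; omega
    obtain ⟨x, hxmem, hgx, hother⟩ := sum_eq_one_unique _ g hgnn hgsum
    have hgle : ∀ e ∈ O ∪ I, g e ≤ 1 := by
      intro e he
      by_cases h : e = x
      · rw [h, hgx]
      · rw [hother e he h]; omega
    have hval : ∀ e ∈ O ∪ I, (g e = 1 ↔ a e = 2*(t:ℤ)) := by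
      intro e he
      by_cases h : e ∈ O
      · rw [hgO e h]; omega
      · have heI : e ∈ I := (Finset.mem_union.mp he).resolve_left h
        rw [hgI e heI]; omega
    constructor
    · left
      refine ⟨hOc, fun e he => ?_, fun e he => ?_⟩
      · have := hgle e (Finset.mem_union_left _ he)
        rw [hgO e he] at this; omega
      · have := hgle e (Finset.mem_union_right _ he)
        rw [hgI e he] at this; omega
    · rw [Finset.card_eq_one]
      refine ⟨x, ?_⟩
      ext y
      simp only [Finset.mem_filter, Finset.mem_singleton]
      constructor
      · rintro ⟨hy, hay⟩
        by_contra hne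
        have h0 := hother y hy hne
        have := (hval y hy).mpr hay
        omega
      · intro hyx
        subst hyx
        exact ⟨hxmem, (hval y hxmem).mp hgx⟩
  · -- O.card = t
    have hIc : I.card = t + 1 := by omega
    set g : α → ℤ := fun e => if e ∈ O then (2*(t:ℤ)+1) - a e else a e - (2*(t:ℤ)-1) with hg
    have hgO : ∀ e ∈ O, g e = (2*(t:ℤ)+1) - a e := by
      intro e he; simp only [hg, he, if_true]
    have hgI : ∀ e ∈ I, g e = a e - (2*(t:ℤ)-1) := by
      intro e he
      have : e ∉ O := fun hc => (Finset.disjoint_left.mp hdisj hc) he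
      simp only [hg, this, if_false]
    have hgsum : ∑ e ∈ O ∪ I, g e = 1 := by
      rw [Finset.sum_union hdisj]
      rw [Finset.sum_congr rfl hgO, Finset.sum_congr rfl hgI]
      have e1 : ∑ x ∈ O, ((2*(t:ℤ)+1) - a x) = (O.card:ℤ)*(2*(t:ℤ)+1) - ∑ x ∈ O, a x := by
        rw [Finset.sum_sub_distrib, Finset.sum_const, nsmul_eq_mul]
      have e2 : ∑ x ∈ I, (a x - (2*(t:ℤ)-1)) = (∑ x ∈ I, a x) - (I.card:ℤ)*(2*(t:ℤ)-1) := by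
        rw [Finset.sum_sub_distrib, Finset.sum_const, nsmul_eq_mul]
      rw [e1, e2, ← hbal, hOc, hIc]
      push_cast
      ring
    have hgnn : ∀ e ∈ O ∪ I, 0 ≤ g e := by
      intro e he
      by_cases h : e ∈ O
      · rw [hgO e h]; have := hhigh e he; omega
      · have heI : e ∈ I := (Finset.mem_union.mp he).resolve_left h
        rw [hgI e heI]; have := hlow e he; omega
    obtain ⟨x, hxmem, hgx, hother⟩ := sum_eq_one_unique _ g hgnn hgsum
    have hgle : ∀ e ∈ O ∪ I, g e ≤ 1 := by
      intro e he
      by_cases h : e = x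
      · rw [h, hgx]
      · rw [hother e he h]; omega
    have hval : ∀ e ∈ O ∪ I, (g e = 1 ↔ a e = 2*(t:ℤ)) := by
      intro e he
      by_cases h : e ∈ O
      · rw [hgO e h]; omega
      · have heI : e ∈ I := (Finset.mem_union.mp he).resolve_left h
        rw [hgI e heI]; omega
    constructor
    · right
      refine ⟨hOc, fun e he => ?_, fun e he => ?_⟩
      · have := hgle e (Finset.mem_union_left _ he)
        rw [hgO e he] at this; omega
      · have := hgle e (Finset.mem_union_right _ he)
        rw [hgI e he] at this; omega
    · rw [Finset.card_eq_one]
      refine ⟨x, ?_⟩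
      ext y
      simp only [Finset.mem_filter, Finset.mem_singleton]
      constructor
      · rintro ⟨hy, hay⟩
        by_contra hne
        have h0 := hother y hy hne
        have := (hval y hy).mpr hay
        omega
      · intro hyx
        subst hyx
        exact ⟨hxmem, (hval y hxmem).mp hgx⟩

end AuxCircFlow

namespace MGaux2
open Finset
open Multigraph

open Multigraph
variable (G : Multigraph)

noncomputable instance : Fintype G.V := Fintype.ofFinite _
noncomputable instance : Fintype G.E := Fintype.ofFinite _
noncomputable instance (p : G.E → Prop) : DecidablePred p := fun e => Classical.dec _
noncomputable instance (p : G.V → Prop) : DecidablePred p := fun e => Classical.dec _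
noncomputable instance : DecidableEq G.E := fun _ _ => Classical.dec _
noncomputable instance : DecidableEq G.V := fun _ _ => Classical.dec _

def Conserv {M : Type*} [AddCommMonoid M] (f : G.E → M) : Prop :=
  ∀ v, ∑ e ∈ univ.filter (fun e => G.tail e = v), f e
      = ∑ e ∈ univ.filter (fun e => G.head e = v), f e

variable {G}

/-- start vertex of a traversal step -/
def startV (p : G.E × Bool) : G.V := if p.2 then G.tail p.1 else G.head p.1
def endV (p : G.E × Bool) : G.V := if p.2 then G.head p.1 else G.tail p.1

lemma inc_startV (p : G.E × Bool) : G.Inc (startV p) p.1 := by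
  unfold startV Inc; split <;> simp
lemma inc_endV (p : G.E × Bool) : G.Inc (endV p) p.1 := by
  unfold endV Inc; split <;> simp

/-- Key walk lemma: if F is nonempty and every vertex incident to an F-edge has
  a second F-edge, then there is a closed trail: m ≥ 1 edges, distinct, chained. -/
lemma exists_closed_trail (F : Finset G.E) (hne : F.Nonempty)
    (hdeg : ∀ v e, e ∈ F → G.Inc v e → ∃ e', e' ∈ F ∧ e' ≠ e ∧ G.Inc v e') :
    ∃ (s m : ℕ) (W : ℕ → G.E × Bool),
      1 ≤ m ∧
      (∀ k, (W k).1 ∈ F) ∧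
      (∀ k, endV (W k) = startV (W (k+1))) ∧
      startV (W s) = endV (W (s + m - 1)) ∧
      (∀ p q, s ≤ p → p < q → q < s + m → (W p).1 ≠ (W q).1) := by
  classical
  obtain ⟨e0, he0⟩ := hne
  -- the step function
  have step : ∀ p : G.E × Bool, p.1 ∈ F →
      ∃ q : G.E × Bool, q.1 ∈ F ∧ q.1 ≠ p.1 ∧ startV q = endV p := by
    intro p hp
    obtain ⟨e', he'F, he'ne, he'inc⟩ := hdeg (endV p) p.1 hp (inc_endV p)
    by_cases h : G.tail e' = endV p
    · exact ⟨(e', true), he'F, he'ne, by simpa [startV] using h⟩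
    · refine ⟨(e', false), he'F, he'ne, ?_⟩
      have : G.head e' = endV p := he'inc.resolve_left h
      simpa [startV] using this
  -- infinite walk
  let next : {p : G.E × Bool // p.1 ∈ F} → {p : G.E × Bool // p.1 ∈ F} :=
    fun p => ⟨Classical.choose (step p.1 p.2), (Classical.choose_spec (step p.1 p.2)).1⟩
  have next_ne : ∀ p, (next p).1.1 ≠ p.1.1 :=
    fun p => (Classical.choose_spec (step p.1 p.2)).2.1
  have next_start : ∀ p, startV (next p).1 = endV p.1 :=
    fun p => (Classical.choose_spec (step p.1 p.2)).2.2
  let W : ℕ → {p : G.E × Bool // p.1 ∈ F} := fun n => next^[n] ⟨(e0, true), he0⟩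
  have Wsucc : ∀ n, W (n+1) = next (W n) := fun n => Function.iterate_succ_apply' next n _
  have chain : ∀ k, endV (W k).1 = startV (W (k+1)).1 := by
    intro k; rw [Wsucc]; exact (next_start (W k)).symm
  have ne_succ : ∀ k, (W (k+1)).1.1 ≠ (W k).1.1 := by
    intro k; rw [Wsucc]; exact next_ne (W k)
  -- pigeonhole
  have : ∃ a b : ℕ, a ≠ b ∧ (W a).1.1 = (W b).1.1 := by
    obtain ⟨a, b, hab, h⟩ := Finite.exists_ne_map_eq_of_infinite (fun n => (W n).1.1)
    exact ⟨a, b, hab, h⟩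
  have hex : ∃ j, ∃ i, i < j ∧ (W i).1.1 = (W j).1.1 := by
    obtain ⟨a, b, hab, h⟩ := this
    rcases lt_or_gt_of_ne hab with hl | hl
    · exact ⟨b, a, hl, h⟩
    · exact ⟨a, b, hl, h.symm⟩
  classical
  let j0 := Nat.find hex
  obtain ⟨i0, hi0, heq⟩ : ∃ i, i < j0 ∧ (W i).1.1 = (W j0).1.1 := Nat.find_spec hex
  have distinct : ∀ p q, p < q → q < j0 → (W p).1.1 ≠ (W q).1.1 := by
    intro p q hpq hq hne'
    exact Nat.find_min hex hq ⟨p, hpq, hne'⟩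
  -- closedness case analysis
  by_cases hb : (W i0).1.2 = (W j0).1.2
  · -- same direction : startV (W j0) = startV (W i0)
    refine ⟨i0, j0 - i0, fun n => (W n).1, by omega, fun k => (W k).2, chain, ?_, ?_⟩
    · have h1 : startV (W j0).1 = startV (W i0).1 := by
        unfold startV; rw [heq, hb]
      have h2 : i0 + (j0 - i0) - 1 + 1 = j0 := by omega
      rw [← h2] at h1
      rw [← chain (i0 + (j0 - i0) - 1)] at h1
      exact h1.symm
    · intro p q h1 h2 h3
      exact distinct p q h2 (by omega)
  · -- opposite: startV (W j0) = endV (W i0) = startV (W (i0+1))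
    have hne2 : j0 ≠ i0 + 1 := by
      intro h
      exact ne_succ i0 (h ▸ heq.symm)
    refine ⟨i0 + 1, j0 - (i0+1), fun n => (W n).1, by omega, fun k => (W k).2, chain, ?_, ?_⟩
    · have h1 : startV (W j0).1 = endV (W i0).1 := by
        unfold startV endV
        rw [heq]
        rcases Bool.eq_false_or_eq_true (W j0).1.2 with h | h <;>
          rcases Bool.eq_false_or_eq_true (W i0).1.2 with h' | h' <;>
            simp [h, h'] <;> simp [h, h'] at hb
      have h2 : i0 + 1 + (j0 - (i0+1)) - 1 + 1 = j0 := by omega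
      rw [← h2] at h1
      rw [← chain (i0 + 1 + (j0 - (i0+1)) - 1)] at h1
      rw [chain i0] at h1
      exact h1.symm
    · intro p q hp h2 h3
      exact distinct p q h2 (by omega)

-- appended content (tested standalone with c.lean prelude via cat)
variable (G) in
lemma rounding (L U : ℤ) (hL : 1 ≤ L)
    (h : ∃ f : G.E → ℝ, Conserv G f ∧ ∀ e, (L:ℝ) ≤ |f e| ∧ |f e| ≤ (U:ℝ)) :
    ∃ g : G.E → ℤ, Conserv G g ∧ ∀ e, L ≤ |g e| ∧ |g e| ≤ U := by
  classical
  set Zr : AddSubgroup ℝ := (Int.castAddHom ℝ).range with hZr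
  have memZr : ∀ x : ℝ, x ∈ Zr ↔ ∃ z : ℤ, (z:ℝ) = x := by
    intro x
    constructor
    · rintro ⟨z, rfl⟩; exact ⟨z, by simp⟩
    · rintro ⟨z, rfl⟩; exact ⟨z, by simp⟩
  set Good : (G.E → ℝ) → Prop :=
    fun f => Conserv G f ∧ ∀ e, (L:ℝ) ≤ |f e| ∧ |f e| ≤ (U:ℝ) with hGoodDef
  set IC : (G.E → ℝ) → ℕ := fun f => (univ.filter (fun e => f e ∈ Zr)).card with hICdef
  set S : Set ℕ := {n | ∃ f, Good f ∧ IC f = n} with hSdef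
  have hSne : S.Nonempty := by
    obtain ⟨f, hf⟩ := h
    exact ⟨IC f, f, hf, rfl⟩
  have hSbdd : BddAbove S := by
    refine ⟨Fintype.card G.E, ?_⟩
    rintro n ⟨f, _, rfl⟩
    exact (card_filter_le _ _).trans (le_of_eq (card_univ))
  obtain ⟨f, hGood, hIC⟩ : ∃ f, Good f ∧ IC f = sSup S := Nat.sSup_mem hSne hSbdd
  by_cases hall : ∀ e, f e ∈ Zr
  · -- all values integral : extract integer flow
    choose g hg using fun e => (memZr _).mp (hall e)
    refine ⟨g, ?_, ?_⟩
    · intro v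
      have hv := hGood.1 v
      have hcast : ((∑ e ∈ univ.filter (fun e => G.tail e = v), g e : ℤ) : ℝ)
          = ((∑ e ∈ univ.filter (fun e => G.head e = v), g e : ℤ) : ℝ) := by
        push_cast
        rw [Finset.sum_congr rfl (fun e _ => hg e), Finset.sum_congr rfl (fun e _ => hg e)]
        exact hv
      exact_mod_cast hcast
    · intro e
      have h1 := (hGood.2 e).1
      have h2 := (hGood.2 e).2
      rw [← hg e] at h1 h2
      constructor
      · exact_mod_cast (by push_cast; exact h1 : (L:ℝ) ≤ ((|g e| : ℤ):ℝ))
      · exact_mod_cast (by push_cast; exact h2 : ((|g e| : ℤ):ℝ) ≤ (U:ℝ))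
  · -- there is a fractional edge: push along a cycle of fractional edges
    exfalso
    push_neg at hall
    set F : Finset G.E := univ.filter (fun e => f e ∉ Zr) with hF
    have hFne : F.Nonempty := by
      obtain ⟨e, he⟩ := hall
      exact ⟨e, by simp [hF, he]⟩
    have hFdeg : ∀ v e, e ∈ F → G.Inc v e → ∃ e', e' ∈ F ∧ e' ≠ e ∧ G.Inc v e' := by
      intro v e heF hinc
      by_contra hno
      push_neg at hno
      -- all other edges at v are integral
      have hint : ∀ e', G.Inc v e' → e' ≠ e → f e' ∈ Zr := by
        intro e' hinc' hne'
        by_contra hni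
        exact hno e' (by simp [hF, hni]) hne' hinc'
      have hv := hGood.1 v
      set A := univ.filter (fun e => G.tail e = v) with hA
      set B := univ.filter (fun e => G.head e = v) with hB
      have hsubA : ∀ e', e' ∈ A → e' ≠ e → f e' ∈ Zr := by
        intro e' h1 h2; exact hint e' (Or.inl (by simpa [hA] using h1)) h2
      have hsubB : ∀ e', e' ∈ B → e' ≠ e → f e' ∈ Zr := by
        intro e' h1 h2; exact hint e' (Or.inr (by simpa [hB] using h1)) h2
      have heZr : f e ∈ Zr := by
        rcases hinc with htl | hhd
        · have heA : e ∈ A := by simp [hA, htl]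
          have heB : e ∉ B := by
            simp only [hB, mem_filter, mem_univ, true_and]
            intro hc; exact G.no_loop e (htl.trans hc.symm)
          have h1 : ∑ x ∈ A, f x = f e + ∑ x ∈ A.erase e, f x :=
            (Finset.add_sum_erase A f heA).symm
          have h2 : ∑ x ∈ A.erase e, f x ∈ Zr :=
            AddSubgroup.sum_mem _ (fun x hx => hsubA x (mem_of_mem_erase hx) (ne_of_mem_erase hx))
          have h3 : ∑ x ∈ B, f x ∈ Zr :=
            AddSubgroup.sum_mem _ (fun x hx => hsubB x hx (by rintro rfl; exact heB hx))
          have : f e = (∑ x ∈ B, f x) - ∑ x ∈ A.erase e, f x := by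
            rw [← hv, h1]; ring
          rw [this]; exact AddSubgroup.sub_mem _ h3 h2
        · have heB : e ∈ B := by simp [hB, hhd]
          have heA : e ∉ A := by
            simp only [hA, mem_filter, mem_univ, true_and]
            intro hc; exact G.no_loop e (hc.trans hhd.symm)
          have h1 : ∑ x ∈ B, f x = f e + ∑ x ∈ B.erase e, f x :=
            (Finset.add_sum_erase B f heB).symm
          have h2 : ∑ x ∈ B.erase e, f x ∈ Zr :=
            AddSubgroup.sum_mem _ (fun x hx => hsubB x (mem_of_mem_erase hx) (ne_of_mem_erase hx))
          have h3 : ∑ x ∈ A, f x ∈ Zr :=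
            AddSubgroup.sum_mem _ (fun x hx => hsubA x hx (by rintro rfl; exact heA hx))
          have : f e = (∑ x ∈ A, f x) - ∑ x ∈ B.erase e, f x := by
            rw [hv, h1]; ring
          rw [this]; exact AddSubgroup.sub_mem _ h3 h2
      simp [hF] at heF
      exact heF heZr
    obtain ⟨s, m, W, hm, hWF, hchain, hclosed, hdist⟩ := exists_closed_trail F hFne hFdeg
    set sgn : ℕ → ℝ := fun k => if (W k).2 then 1 else -1 with hsgn
    set idx : Finset ℕ := Finset.Ico s (s+m) with hidx
    set d : G.E → ℝ := fun e => ∑ k ∈ idx, (if (W k).1 = e then sgn k else 0) with hd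
    set cyc : Finset G.E := idx.image (fun k => (W k).1) with hcyc
    have hcycF : ∀ e ∈ cyc, e ∈ F := by
      intro e he
      obtain ⟨k, _, rfl⟩ := Finset.mem_image.mp he
      exact hWF k
    have d_notmem : ∀ e, e ∉ cyc → d e = 0 := by
      intro e he
      refine Finset.sum_eq_zero fun k hk => ?_
      rw [if_neg]
      intro hc
      exact he (Finset.mem_image.mpr ⟨k, hk, hc⟩)
    have d_mem : ∀ k ∈ idx, d ((W k).1) = sgn k := by
      intro k hk
      show (∑ k' ∈ idx, if (W k').1 = (W k).1 then sgn k' else 0) = sgn k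
      rw [Finset.sum_eq_single_of_mem k hk (fun k' hk' hne' => ?_), if_pos rfl]
      rw [if_neg]
      simp only [hidx, Finset.mem_Ico] at hk hk'
      rcases lt_or_gt_of_ne hne' with hlt | hlt
      · exact hdist k' k hk'.1 hlt hk.2
      · exact fun hc => hdist k k' hk.1 hlt hk'.2 hc.symm
    have d_pm : ∀ e ∈ cyc, d e = 1 ∨ d e = -1 := by
      intro e he
      obtain ⟨k, hk, rfl⟩ := Finset.mem_image.mp he
      rw [d_mem k hk, hsgn]
      rcases Bool.eq_false_or_eq_true (W k).2 with h | h <;> simp [h]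
    have d_conserv : Conserv G d := by
      intro v
      have hswap : ∀ (P : Finset G.E),
          ∑ e ∈ P, d e = ∑ k ∈ idx, (if (W k).1 ∈ P then sgn k else 0) := by
        intro P
        rw [hd]
        simp only []
        rw [Finset.sum_comm]
        refine Finset.sum_congr rfl fun k _ => ?_
        exact Finset.sum_ite_eq P ((W k).1) (fun _ => sgn k)
      rw [hswap, hswap]
      have key : ∀ k,
          (if (W k).1 ∈ univ.filter (fun e => G.tail e = v) then sgn k else 0)
          - (if (W k).1 ∈ univ.filter (fun e => G.head e = v) then sgn k else 0)
          = (if startV (W k) = v then (1:ℝ) else 0) - (if endV (W k) = v then 1 else 0) := by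
        intro k
        simp only [Finset.mem_filter, Finset.mem_univ, true_and, hsgn]
        rcases Bool.eq_false_or_eq_true (W k).2 with h | h <;>
          simp only [startV, endV, h, Bool.false_eq_true, if_false, if_true] <;>
            split_ifs <;> norm_num
      have claim2 : ∑ k ∈ idx, (if startV (W k) = v then (1:ℝ) else 0)
          = ∑ k ∈ idx, (if endV (W k) = v then (1:ℝ) else 0) := by
        set g : G.V → ℝ := fun u => if u = v then 1 else 0 with hg
        obtain ⟨m', rfl⟩ : ∃ m', m = m' + 1 := ⟨m - 1, by omega⟩
        rw [hidx, Finset.sum_Ico_eq_sum_range, Finset.sum_Ico_eq_sum_range]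
        simp only [add_tsub_cancel_left]
        calc ∑ i ∈ Finset.range (m'+1), (if startV (W (s+i)) = v then (1:ℝ) else 0)
            = g (startV (W s)) + ∑ i ∈ Finset.range m', g (startV (W (s+(i+1)))) := by
              rw [Finset.sum_range_succ']
              simp only [hg, add_zero]
              ring
          _ = g (endV (W (s+m'))) + ∑ i ∈ Finset.range m', g (endV (W (s+i))) := by
              congr 1
              · have h' : s + (m'+1) - 1 = s + m' := by omega
                rw [hclosed, h']
              · refine Finset.sum_congr rfl fun i _ => ?_
                have h' : s + (i + 1) = s + i + 1 := by omega
                rw [h', ← hchain (s+i)]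
          _ = ∑ i ∈ Finset.range (m'+1), (if endV (W (s+i)) = v then (1:ℝ) else 0) := by
              rw [Finset.sum_range_succ]
              simp only [hg]
              ring
      have := Finset.sum_sub_distrib (s := idx)
        (f := fun k => (if (W k).1 ∈ univ.filter (fun e => G.tail e = v) then sgn k else 0))
        (g := fun k => (if (W k).1 ∈ univ.filter (fun e => G.head e = v) then sgn k else 0))
      rw [← sub_eq_zero, ← this]
      rw [Finset.sum_congr rfl (fun k _ => key k), Finset.sum_sub_distrib, claim2]
      ring
    -- choose the push amount
    have hcycne : cyc.Nonempty := by
      refine ⟨(W s).1, Finset.mem_image.mpr ⟨s, ?_, rfl⟩⟩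
      simp [hidx]; omega
    set gap : G.E → ℝ := fun e => if d e = 1 then ⌈f e⌉ - f e else f e - ⌊f e⌋ with hgap
    obtain ⟨estar, hestar, hminim⟩ := Finset.exists_min_image cyc gap hcycne
    have gap_pos : ∀ e ∈ cyc, 0 < gap e := by
      intro e he
      have heF := hcycF e he
      have hni : f e ∉ Zr := by simpa [hF] using heF
      have hne1 : f e ≠ (⌈f e⌉ : ℝ) := fun hc => hni ((memZr _).mpr ⟨⌈f e⌉, hc.symm⟩)
      have hne2 : f e ≠ (⌊f e⌋ : ℝ) := fun hc => hni ((memZr _).mpr ⟨⌊f e⌋, hc.symm⟩)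
      simp only [hgap]
      split
      · have := Int.le_ceil (f e); cases this.lt_or_eq with
        | inl h => linarith
        | inr h => exact absurd h hne1
      · have := Int.floor_le (f e); cases this.lt_or_eq with
        | inl h => linarith
        | inr h => exact absurd h.symm hne2
    set δ : ℝ := gap estar with hδ
    have hδpos : 0 < δ := gap_pos estar hestar
    set f' : G.E → ℝ := fun e => f e + δ * d e with hf'
    have hGood' : Good f' := by
      constructor
      · intro v
        simp only [hf']
        rw [Finset.sum_add_distrib, Finset.sum_add_distrib, ← Finset.mul_sum, ← Finset.mul_sum,
          hGood.1 v, d_conserv v]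
      · intro e
        by_cases he : e ∈ cyc
        · have hde := d_pm e he
          have hx1 := (hGood.2 e).1
          have hx2 := (hGood.2 e).2
          have hni : f e ∉ Zr := by simpa [hF] using hcycF e he
          have hδle : δ ≤ gap e := hminim e he
          have hxne : f e ≠ 0 := by
            intro hc
            rw [hc] at hx1
            simp at hx1
            omega
          have hLR : (1:ℝ) ≤ (L:ℝ) := by exact_mod_cast hL
          rcases hde with hde | hde
          · -- d e = 1 : f' e = f e + δ, δ ≤ ⌈f e⌉ - f e
            have hgape : gap e = ⌈f e⌉ - f e := by rw [hgap]; simp [hde]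
            have hub : f e + δ ≤ (⌈f e⌉ : ℝ) := by
              rw [hgape] at hδle; linarith
            have hf'e : f' e = f e + δ := by simp only [hf']; rw [hde]; ring
            rcases lt_or_gt_of_ne hxne with hneg | hpos
            · -- f e < 0 : -U ≤ f e ≤ -L
              have habs : |f e| = -(f e) := abs_of_neg hneg
              have h1 : f e ≤ -(L:ℝ) := by rw [habs] at hx1; linarith
              have h2 : -(U:ℝ) ≤ f e := by rw [habs] at hx2; linarith
              have hceil : (⌈f e⌉ : ℝ) ≤ -(L:ℝ) := by
                exact_mod_cast Int.ceil_le.mpr (by exact_mod_cast h1)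
              have hle : f' e ≤ -(L:ℝ) := by rw [hf'e]; linarith
              have hgt : -(U:ℝ) ≤ f' e := by rw [hf'e]; linarith
              have : |f' e| = -(f' e) := abs_of_neg (by linarith)
              rw [this]; constructor <;> linarith
            · have habs : |f e| = f e := abs_of_pos hpos
              have h1 : (L:ℝ) ≤ f e := by rw [habs] at hx1; linarith
              have h2 : f e ≤ (U:ℝ) := by rw [habs] at hx2; linarith
              have hceil : (⌈f e⌉ : ℝ) ≤ (U:ℝ) := by
                exact_mod_cast Int.ceil_le.mpr (by exact_mod_cast h2)
              have hle : f' e ≤ (U:ℝ) := by rw [hf'e]; linarith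
              have hgt : (L:ℝ) ≤ f' e := by rw [hf'e]; linarith
              have : |f' e| = f' e := abs_of_pos (by linarith)
              rw [this]; exact ⟨hgt, hle⟩
          · -- d e = -1 : f' e = f e - δ, δ ≤ f e - ⌊f e⌋
            have hne1 : d e ≠ 1 := by rw [hde]; norm_num
            have hgape : gap e = f e - ⌊f e⌋ := by rw [hgap]; simp [hne1]
            have hlb : (⌊f e⌋ : ℝ) ≤ f e - δ := by
              rw [hgape] at hδle; linarith
            have hf'e : f' e = f e - δ := by simp only [hf']; rw [hde]; ring
            rcases lt_or_gt_of_ne hxne with hneg | hpos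
            · have habs : |f e| = -(f e) := abs_of_neg hneg
              have h1 : f e ≤ -(L:ℝ) := by rw [habs] at hx1; linarith
              have h2 : -(U:ℝ) ≤ f e := by rw [habs] at hx2; linarith
              have hfloor : -(U:ℝ) ≤ (⌊f e⌋ : ℝ) := by
                exact_mod_cast Int.le_floor.mpr (by exact_mod_cast h2)
              have hgt : -(U:ℝ) ≤ f' e := by rw [hf'e]; linarith
              have hle : f' e ≤ -(L:ℝ) := by rw [hf'e]; linarith
              have : |f' e| = -(f' e) := abs_of_neg (by linarith)
              rw [this]; constructor <;> linarith
            · have habs : |f e| = f e := abs_of_pos hpos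
              have h1 : (L:ℝ) ≤ f e := by rw [habs] at hx1; linarith
              have h2 : f e ≤ (U:ℝ) := by rw [habs] at hx2; linarith
              have hfloor : (L:ℝ) ≤ (⌊f e⌋ : ℝ) := by
                exact_mod_cast Int.le_floor.mpr (by exact_mod_cast h1)
              have hgt : (L:ℝ) ≤ f' e := by rw [hf'e]; linarith
              have hle : f' e ≤ (U:ℝ) := by rw [hf'e]; linarith
              have : |f' e| = f' e := abs_of_pos (by linarith)
              rw [this]; exact ⟨hgt, hle⟩
        · have hde : d e = 0 := d_notmem e he
          have : f' e = f e := by simp only [hf']; rw [hde]; ring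
          rw [this]; exact hGood.2 e
    -- the count increases
    have hold : ∀ e, f e ∈ Zr → f' e = f e := by
      intro e he
      have : e ∉ cyc := fun hc => by simpa [hF, he] using hcycF e hc
      have hde : d e = 0 := d_notmem e this
      simp only [hf']; rw [hde]; ring
    have hnew : f' estar ∈ Zr := by
      rcases d_pm estar hestar with hde | hde
      · have : f' estar = (⌈f estar⌉ : ℝ) := by
          simp only [hf', hδ, hgap]
          rw [if_pos hde, hde]
          ring
        rw [this]; exact (memZr _).mpr ⟨⌈f estar⌉, rfl⟩
      · have hne1 : d estar ≠ 1 := by rw [hde]; norm_num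
        have : f' estar = (⌊f estar⌋ : ℝ) := by
          simp only [hf', hδ, hgap]
          rw [if_neg hne1, hde]
          ring
        rw [this]; exact (memZr _).mpr ⟨⌊f estar⌋, rfl⟩
    have hsub : insert estar (univ.filter (fun e => f e ∈ Zr))
        ⊆ univ.filter (fun e => f' e ∈ Zr) := by
      intro e he
      rcases Finset.mem_insert.mp he with rfl | he
      · simp [hnew]
      · simp only [mem_filter, mem_univ, true_and] at he ⊢
        rw [hold e he]; exact he
    have hestarni : estar ∉ univ.filter (fun e => f e ∈ Zr) := by
      have := hcycF estar hestar
      simp only [hF, mem_filter, mem_univ, true_and] at this ⊢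
      exact this
    have hcard : sSup S + 1 ≤ IC f' := by
      have h1 : (insert estar (univ.filter (fun e => f e ∈ Zr))).card = sSup S + 1 := by
        rw [Finset.card_insert_of_notMem hestarni]
        have h2 := hIC
        simp only [hICdef] at h2
        omega
      calc sSup S + 1 = _ := h1.symm
        _ ≤ IC f' := Finset.card_le_card hsub
    have : IC f' ≤ sSup S := le_csSup hSbdd ⟨f', hGood', rfl⟩
    omega



lemma tail_ne_head (e : G.E) : G.tail e ≠ G.head e := G.no_loop e

lemma inc_cases {v : G.V} {e : G.E} (h : G.Inc v e) : v = G.tail e ∨ v = G.head e := by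
  rcases h with h | h
  · exact Or.inl h.symm
  · exact Or.inr h.symm

variable (G) in
lemma koenig (A : Set G.V) : ∀ (k : ℕ) (F : Finset G.E),
    (∀ e ∈ F, (G.tail e ∈ A ↔ G.head e ∉ A)) →
    (∀ v, (F.filter (fun e => G.Inc v e)).card = k) →
    ∃ c : G.E → ℕ, (∀ e ∈ F, c e < k) ∧
      ∀ e e', e ∈ F → e' ∈ F → e ≠ e' → (∃ v, G.Inc v e ∧ G.Inc v e') → c e ≠ c e' := by
  intro k
  induction k with
  | zero =>
    intro F hbip hdeg
    refine ⟨fun _ => 0, ?_, ?_⟩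
    · intro e he
      exfalso
      have hmem : e ∈ F.filter (fun e' => G.Inc (G.tail e) e') :=
        mem_filter.mpr ⟨he, Or.inl rfl⟩
      rw [Finset.card_eq_zero.mp (hdeg (G.tail e))] at hmem
      exact absurd hmem (Finset.notMem_empty e)
    · intro e e' he _ _ _
      exfalso
      have hmem : e ∈ F.filter (fun e'' => G.Inc (G.tail e) e'') :=
        mem_filter.mpr ⟨he, Or.inl rfl⟩
      rw [Finset.card_eq_zero.mp (hdeg (G.tail e))] at hmem
      exact absurd hmem (Finset.notMem_empty e)
  | succ k ih =>
    intro F hbip hdeg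
    classical
    -- A-end and B-end of an edge of F
    set AEnd : G.E → G.V := fun e => if G.tail e ∈ A then G.tail e else G.head e with hAEndD
    set BEnd : G.E → G.V := fun e => if G.tail e ∈ A then G.head e else G.tail e with hBEndD
    have hA_mem : ∀ e ∈ F, AEnd e ∈ A := by
      intro e he
      simp only [hAEndD]
      split
      · assumption
      · rcases (not_iff_not.mpr (hbip e he)).mp (by assumption) with h
        exact not_not.mp h
    have hB_nmem : ∀ e ∈ F, BEnd e ∉ A := by
      intro e he
      simp only [hBEndD]
      split
      · exact (hbip e he).mp (by assumption)
      · assumption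
    have hA_inc : ∀ e, G.Inc (AEnd e) e := by
      intro e; simp only [hAEndD]; split
      · exact Or.inl rfl
      · exact Or.inr rfl
    have hB_inc : ∀ e, G.Inc (BEnd e) e := by
      intro e; simp only [hBEndD]; split
      · exact Or.inr rfl
      · exact Or.inl rfl
    have hABends : ∀ (v : G.V) (e : G.E), G.Inc v e → v = AEnd e ∨ v = BEnd e := by
      intro v e hv
      simp only [hAEndD, hBEndD]
      rcases inc_cases hv with h | h <;> split <;> tauto
    have hA_uniq : ∀ e ∈ F, ∀ v, v ∈ A → G.Inc v e → v = AEnd e := by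
      intro e he v hvA hinc
      rcases hABends v e hinc with h | h
      · exact h
      · exact absurd (h ▸ hvA) (hB_nmem e he)
    have hB_uniq : ∀ e ∈ F, ∀ v, v ∉ A → G.Inc v e → v = BEnd e := by
      intro e he v hvA hinc
      rcases hABends v e hinc with h | h
      · exact absurd (h ▸ hA_mem e he) hvA
      · exact h
    set Averts : Finset G.V := univ.filter (fun v => v ∈ A) with hAverts
    set Bverts : Finset G.V := univ.filter (fun v => v ∉ A) with hBverts
    -- double counting
    have hcountA : F.card = Averts.card * (k+1) := by
      have hun : F = Averts.biUnion (fun v => F.filter (fun e => G.Inc v e)) := by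
        ext e
        simp only [Finset.mem_biUnion, mem_filter, mem_univ, true_and, hAverts]
        constructor
        · intro he
          exact ⟨AEnd e, hA_mem e he, he, hA_inc e⟩
        · rintro ⟨v, _, he, _⟩; exact he
      have hdisj : ∀ v ∈ Averts, ∀ v' ∈ Averts, v ≠ v' →
          Disjoint (F.filter (fun e => G.Inc v e)) (F.filter (fun e => G.Inc v' e)) := by
        intro v hv v' hv' hne
        simp only [hAverts, mem_filter, mem_univ, true_and] at hv hv'
        rw [Finset.disjoint_left]
        intro e he he'
        simp only [mem_filter] at he he'
        exact hne ((hA_uniq e he.1 v hv he.2).trans (hA_uniq e he.1 v' hv' he'.2).symm)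
      rw [hun, Finset.card_biUnion hdisj]
      rw [Finset.sum_congr rfl (fun v _ => hdeg v), Finset.sum_const, smul_eq_mul]
    have hcountB : F.card = Bverts.card * (k+1) := by
      have hun : F = Bverts.biUnion (fun v => F.filter (fun e => G.Inc v e)) := by
        ext e
        simp only [Finset.mem_biUnion, mem_filter, mem_univ, true_and, hBverts]
        constructor
        · intro he
          exact ⟨BEnd e, hB_nmem e he, he, hB_inc e⟩
        · rintro ⟨v, _, he, _⟩; exact he
      have hdisj : ∀ v ∈ Bverts, ∀ v' ∈ Bverts, v ≠ v' →
          Disjoint (F.filter (fun e => G.Inc v e)) (F.filter (fun e => G.Inc v' e)) := by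
        intro v hv v' hv' hne
        simp only [hBverts, mem_filter, mem_univ, true_and] at hv hv'
        rw [Finset.disjoint_left]
        intro e he he'
        simp only [mem_filter] at he he'
        exact hne ((hB_uniq e he.1 v hv he.2).trans (hB_uniq e he.1 v' hv' he'.2).symm)
      rw [hun, Finset.card_biUnion hdisj]
      rw [Finset.sum_congr rfl (fun v _ => hdeg v), Finset.sum_const, smul_eq_mul]
    have hABcard : Averts.card = Bverts.card :=
      Nat.eq_of_mul_eq_mul_right (Nat.succ_pos k) (hcountA ▸ hcountB)
    -- Hall's theorem
    set nbr : {v : G.V // v ∈ A} → Finset G.V :=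
      fun a => (F.filter (fun e => G.Inc a.1 e)).image BEnd with hnbr
    have hhall : ∀ s : Finset {v : G.V // v ∈ A}, s.card ≤ (s.biUnion nbr).card := by
      intro s
      have hdisj : ∀ a ∈ s, ∀ a' ∈ s, a ≠ a' →
          Disjoint (F.filter (fun e => G.Inc a.1 e)) (F.filter (fun e => G.Inc a'.1 e)) := by
        intro a _ a' _ hne
        rw [Finset.disjoint_left]
        intro e he he'
        simp only [mem_filter] at he he'
        exact hne (Subtype.ext ((hA_uniq e he.1 a.1 a.2 he.2).trans
          (hA_uniq e he.1 a'.1 a'.2 he'.2).symm))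
      have hTcard : (s.biUnion (fun a => F.filter (fun e => G.Inc a.1 e))).card = s.card * (k+1) := by
        rw [Finset.card_biUnion hdisj]
        rw [Finset.sum_congr rfl (fun a _ => hdeg a.1), Finset.sum_const, smul_eq_mul]
      have hsub : s.biUnion (fun a => F.filter (fun e => G.Inc a.1 e))
          ⊆ (s.biUnion nbr).biUnion (fun v => F.filter (fun e => G.Inc v e)) := by
        intro e he
        obtain ⟨a, ha, hemem⟩ := Finset.mem_biUnion.mp he
        simp only [mem_filter] at hemem
        refine Finset.mem_biUnion.mpr ⟨BEnd e, ?_, mem_filter.mpr ⟨hemem.1, hB_inc e⟩⟩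
        exact Finset.mem_biUnion.mpr ⟨a, ha, Finset.mem_image.mpr ⟨e, mem_filter.mpr hemem, rfl⟩⟩
      have hle : s.card * (k+1) ≤ (s.biUnion nbr).card * (k+1) := by
        rw [← hTcard]
        calc _ ≤ ∑ v ∈ s.biUnion nbr, (F.filter (fun e => G.Inc v e)).card :=
              (Finset.card_le_card hsub).trans (Finset.card_biUnion_le)
          _ = (s.biUnion nbr).card * (k+1) := by
              rw [Finset.sum_congr rfl (fun v _ => hdeg v), Finset.sum_const, smul_eq_mul]
      exact Nat.le_of_mul_le_mul_right hle (Nat.succ_pos k)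
    obtain ⟨f, hfinj, hfmem⟩ := (Finset.all_card_le_biUnion_card_iff_exists_injective nbr).mp hhall
    choose ea hea hBea using fun a => Finset.mem_image.mp (hfmem a)
    have heaF : ∀ a, ea a ∈ F := fun a => (mem_filter.mp (hea a)).1
    have heaInc : ∀ a, G.Inc a.1 (ea a) := fun a => (mem_filter.mp (hea a)).2
    have hfa_nA : ∀ a, f a ∉ A := fun a => (hBea a) ▸ hB_nmem (ea a) (heaF a)
    have haAEnd : ∀ a, a.1 = AEnd (ea a) := fun a => hA_uniq (ea a) (heaF a) a.1 a.2 (heaInc a)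
    have hfaInc : ∀ a, G.Inc (f a) (ea a) := fun a => (hBea a) ▸ hB_inc (ea a)
    set N : Finset G.E := univ.image ea with hN
    have hNsub : N ⊆ F := by
      intro e he
      obtain ⟨a, _, rfl⟩ := Finset.mem_image.mp he
      exact heaF a
    -- every vertex meets exactly one edge of N
    have hNone : ∀ v, (N.filter (fun e => G.Inc v e)).card = 1 := by
      intro v
      by_cases hv : v ∈ A
      · rw [Finset.card_eq_one]
        refine ⟨ea ⟨v, hv⟩, ?_⟩
        ext e
        simp only [mem_filter, Finset.mem_singleton, hN, Finset.mem_image, mem_univ, true_and]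
        constructor
        · rintro ⟨⟨a, rfl⟩, hinc⟩
          have : v = AEnd (ea a) ∨ v = BEnd (ea a) := hABends v (ea a) hinc
          rcases this with h | h
          · have : a = ⟨v, hv⟩ := Subtype.ext ((haAEnd a).trans h.symm)
            rw [this]
          · exact absurd (h ▸ hv) (hB_nmem (ea a) (heaF a))
        · rintro rfl
          exact ⟨⟨⟨v, hv⟩, rfl⟩, heaInc ⟨v, hv⟩⟩
      · -- v ∉ A : use surjectivity of f onto B-vertices
        have hcards : Fintype.card {v : G.V // v ∈ A} = Fintype.card {v : G.V // v ∉ A} := by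
          rw [Fintype.card_subtype, Fintype.card_subtype]
          exact hABcard
        set g : {v : G.V // v ∈ A} → {v : G.V // v ∉ A} := fun a => ⟨f a, hfa_nA a⟩ with hg
        have hginj : Function.Injective g := by
          intro a a' h
          exact hfinj (congrArg Subtype.val h)
        have hgsurj : Function.Surjective g :=
          ((Fintype.bijective_iff_injective_and_card g).mpr ⟨hginj, hcards⟩).2
        obtain ⟨a0, ha0⟩ := hgsurj ⟨v, hv⟩
        have hfa0 : f a0 = v := congrArg Subtype.val ha0
        rw [Finset.card_eq_one]
        refine ⟨ea a0, ?_⟩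
        ext e
        simp only [mem_filter, Finset.mem_singleton, hN, Finset.mem_image, mem_univ, true_and]
        constructor
        · rintro ⟨⟨a, rfl⟩, hinc⟩
          rcases hABends v (ea a) hinc with h | h
          · exact absurd (by rw [h]; exact (haAEnd a) ▸ hA_mem (ea a) (heaF a) : v ∈ A) hv
          · have hfav : f a = v := by rw [← hBea a]; exact h.symm
            have : a = a0 := hfinj (hfav.trans hfa0.symm)
            rw [this]
        · rintro rfl
          refine ⟨⟨a0, rfl⟩, ?_⟩
          rw [← hfa0, ← hBea a0]
          exact hB_inc (ea a0)
    -- recurse on F \ N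
    set F' : Finset G.E := F \ N with hF'
    have hbip' : ∀ e ∈ F', (G.tail e ∈ A ↔ G.head e ∉ A) :=
      fun e he => hbip e (Finset.mem_sdiff.mp he).1
    have hdeg' : ∀ v, (F'.filter (fun e => G.Inc v e)).card = k := by
      intro v
      have hsd : F'.filter (fun e => G.Inc v e)
          = (F.filter (fun e => G.Inc v e)) \ (N.filter (fun e => G.Inc v e)) := by
        ext e
        simp only [hF', mem_filter, Finset.mem_sdiff]
        tauto
      rw [hsd, Finset.card_sdiff_of_subset (Finset.filter_subset_filter _ hNsub), hdeg v, hNone v]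
      omega
    obtain ⟨c', hc'lt, hc'prop⟩ := ih F' hbip' hdeg'
    refine ⟨fun e => if e ∈ N then k else c' e, ?_, ?_⟩
    · intro e he
      by_cases h : e ∈ N
      · simp only [h, if_true]
        omega
      · simp only [h, if_false]
        have := hc'lt e (Finset.mem_sdiff.mpr ⟨he, h⟩)
        omega
    · intro e e' he he' hne hadj
      obtain ⟨v, hv, hv'⟩ := hadj
      by_cases h1 : e ∈ N <;> by_cases h2 : e' ∈ N
      · exfalso
        have hsub2 : ({e, e'} : Finset G.E) ⊆ N.filter (fun e => G.Inc v e) := by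
          intro x hx
          rcases Finset.mem_insert.mp hx with rfl | hx
          · exact mem_filter.mpr ⟨h1, hv⟩
          · rw [Finset.mem_singleton.mp hx]
            exact mem_filter.mpr ⟨h2, hv'⟩
        have := (Finset.card_le_card hsub2).trans (le_of_eq (hNone v))
        rw [Finset.card_pair hne] at this
        omega
      · simp only [h1, h2, if_true, if_false]
        have : e' ∈ F' := Finset.mem_sdiff.mpr ⟨he', h2⟩
        have := hc'lt e' this
        omega
      · simp only [h1, h2, if_true, if_false]
        have : e ∈ F' := Finset.mem_sdiff.mpr ⟨he, h1⟩
        have := hc'lt e this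
        omega
      · simp only [h1, h2, if_false]
        exact hc'prop e e' (Finset.mem_sdiff.mpr ⟨he, h1⟩) (Finset.mem_sdiff.mpr ⟨he', h2⟩)
          hne ⟨v, hv, hv'⟩



variable (G) in
lemma isNZFlow_iff (r : ℝ) (f : G.E → ℝ) :
    G.IsNZFlow r f ↔ (∀ e, 1 ≤ |f e| ∧ |f e| ≤ r - 1) ∧ Conserv G f := by
  unfold Multigraph.IsNZFlow Conserv
  have h1 : ∀ (p : G.E → Prop), {e | p e} = ((univ.filter p : Finset G.E) : Set G.E) := by
    intro p; ext e; simp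
  constructor
  · rintro ⟨hb, hc⟩
    refine ⟨hb, fun v => ?_⟩
    have := hc v
    rwa [h1 (fun e => G.tail e = v), h1 (fun e => G.head e = v),
      finsum_mem_coe_finset, finsum_mem_coe_finset] at this
  · rintro ⟨hb, hc⟩
    refine ⟨hb, fun v => ?_⟩
    rw [h1 (fun e => G.tail e = v), h1 (fun e => G.head e = v),
      finsum_mem_coe_finset, finsum_mem_coe_finset]
    exact hc v

lemma degree_eq_card_filter (v : G.V) :
    G.degree v = (univ.filter (fun e => G.Inc v e)).card := by
  unfold Multigraph.degree
  rw [Nat.card_eq_fintype_card, Fintype.card_subtype]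

variable (G) in
theorem main_class1 (t : ℕ) (ht : 1 ≤ t) (hreg : G.IsRegular (2 * t + 1))
    (hV : Nonempty G.V)
    (h : ∃ h : G.E → ℤ, Conserv G h ∧
      ∀ e, 2*(t:ℤ)-1 ≤ |h e| ∧ |h e| ≤ 2*(t:ℤ)+1) : G.IsClass1 := by
  classical
  obtain ⟨h, hcons, hbnd⟩ := h
  have hne0 : ∀ e, h e ≠ 0 := by
    intro e hc
    have := (hbnd e).1
    rw [hc] at this
    simp at this
    omega
  set a : G.E → ℤ := fun e => |h e| with ha
  set Out : G.V → Finset G.E := fun v =>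
    univ.filter (fun e => (G.tail e = v ∧ 0 < h e) ∨ (G.head e = v ∧ h e < 0)) with hOut
  set Inn : G.V → Finset G.E := fun v =>
    univ.filter (fun e => (G.head e = v ∧ 0 < h e) ∨ (G.tail e = v ∧ h e < 0)) with hInn
  have hdisjOI : ∀ v, Disjoint (Out v) (Inn v) := by
    intro v
    rw [Finset.disjoint_left]
    intro e he1 he2
    simp only [hOut, hInn, mem_filter, mem_univ, true_and] at he1 he2
    rcases he1 with ⟨h1, h2⟩ | ⟨h1, h2⟩ <;> rcases he2 with ⟨h3, h4⟩ | ⟨h3, h4⟩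
    · exact G.no_loop e (h1.trans h3.symm)
    · omega
    · omega
    · exact G.no_loop e (h3.trans h1.symm)
  have hunion : ∀ v, Out v ∪ Inn v = univ.filter (fun e => G.Inc v e) := by
    intro v
    ext e
    simp only [hOut, hInn, Finset.mem_union, mem_filter, mem_univ, true_and]
    simp only [Multigraph.Inc]
    have := hne0 e
    constructor
    · rintro ((⟨h1, _⟩ | ⟨h1, _⟩) | (⟨h1, _⟩ | ⟨h1, _⟩)) <;> [exact Or.inl h1;
        exact Or.inr h1; exact Or.inr h1; exact Or.inl h1]
    · intro hinc
      rcases hinc with h1 | h1 <;> rcases lt_or_gt_of_ne this with h2 | h2 <;> tauto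
  have hcardOI : ∀ v, (Out v).card + (Inn v).card = 2*t+1 := by
    intro v
    rw [← Finset.card_union_of_disjoint (hdisjOI v), hunion v, ← degree_eq_card_filter v, hreg v]
  -- balance of absolute values
  have hbalv : ∀ v, ∑ e ∈ Out v, a e = ∑ e ∈ Inn v, a e := by
    intro v
    have key : ∀ (T : Finset G.E), ∑ e ∈ T, h e
        = ∑ e ∈ T.filter (fun e => 0 < h e), a e - ∑ e ∈ T.filter (fun e => h e < 0), a e := by
      intro T
      rw [← Finset.sum_filter_add_sum_filter_not T (fun e => 0 < h e) h]
      have hnotpos : T.filter (fun e => ¬ 0 < h e) = T.filter (fun e => h e < 0) := by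
        apply Finset.filter_congr
        intro e _
        have := hne0 e
        constructor <;> intro hh <;> omega
      rw [hnotpos]
      have e1 : ∑ e ∈ T.filter (fun e => 0 < h e), h e
          = ∑ e ∈ T.filter (fun e => 0 < h e), a e := by
        refine Finset.sum_congr rfl fun e he => ?_
        simp only [ha]
        rw [abs_of_pos (mem_filter.mp he).2]
      have e2 : ∑ e ∈ T.filter (fun e => h e < 0), h e
          = - ∑ e ∈ T.filter (fun e => h e < 0), a e := by
        rw [← Finset.sum_neg_distrib]
        refine Finset.sum_congr rfl fun e he => ?_
        simp only [ha]
        rw [abs_of_neg (mem_filter.mp he).2]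
        ring
      rw [e1, e2]
      ring
    have hT := key (univ.filter (fun e => G.tail e = v))
    have hH := key (univ.filter (fun e => G.head e = v))
    rw [hcons v] at hT
    -- decompose Out and Inn
    have hOutsplit : Out v
        = (univ.filter (fun e => G.tail e = v)).filter (fun e => 0 < h e)
          ∪ (univ.filter (fun e => G.head e = v)).filter (fun e => h e < 0) := by
      ext e
      simp only [hOut, Finset.mem_union, mem_filter, mem_univ, true_and]
      try tauto
    have hInnsplit : Inn v
        = (univ.filter (fun e => G.head e = v)).filter (fun e => 0 < h e)
          ∪ (univ.filter (fun e => G.tail e = v)).filter (fun e => h e < 0) := by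
      ext e
      simp only [hInn, Finset.mem_union, mem_filter, mem_univ, true_and]
      try tauto
    have hd1 : Disjoint ((univ.filter (fun e => G.tail e = v)).filter (fun e => 0 < h e))
        ((univ.filter (fun e => G.head e = v)).filter (fun e => h e < 0)) := by
      rw [Finset.disjoint_left]
      intro e he1 he2
      simp only [mem_filter, mem_univ, true_and] at he1 he2
      omega
    have hd2 : Disjoint ((univ.filter (fun e => G.head e = v)).filter (fun e => 0 < h e))
        ((univ.filter (fun e => G.tail e = v)).filter (fun e => h e < 0)) := by
      rw [Finset.disjoint_left]
      intro e he1 he2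
      simp only [mem_filter, mem_univ, true_and] at he1 he2
      omega
    rw [hOutsplit, hInnsplit, Finset.sum_union hd1, Finset.sum_union hd2]
    omega
  have hlowhigh : ∀ (v : G.V), ∀ e ∈ Out v ∪ Inn v,
      (2*(t:ℤ)-1 ≤ a e ∧ a e ≤ 2*(t:ℤ)+1) := fun v e _ => hbnd e
  have hloc := fun v => local_struct t ht (Out v) (Inn v) (hdisjOI v) a (hcardOI v) (hbalv v)
    (fun e he => (hlowhigh v e he).1) (fun e he => (hlowhigh v e he).2)
  set Mset : Finset G.E := univ.filter (fun e => a e = 2*(t:ℤ)) with hMset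
  have hMone : ∀ v, (Mset.filter (fun e => G.Inc v e)).card = 1 := by
    intro v
    have := (hloc v).2
    have heq : (Out v ∪ Inn v).filter (fun e => a e = 2*(t:ℤ))
        = Mset.filter (fun e => G.Inc v e) := by
      rw [hunion v]
      ext e
      simp only [hMset, mem_filter, mem_univ, true_and]
      tauto
    rw [← heq]
    exact this
  set A : Set G.V := {v | (Out v).card = t+1} with hA
  have hfirst : ∀ v, v ∈ A →
      ((∀ e ∈ Out v, a e ≤ 2*(t:ℤ)) ∧ (∀ e ∈ Inn v, 2*(t:ℤ) ≤ a e)) := by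
    intro v hv
    rcases (hloc v).1 with ⟨_, h1, h2⟩ | ⟨hc, _, _⟩
    · exact ⟨h1, h2⟩
    · simp only [hA, Set.mem_setOf_eq] at hv
      omega
  have hsecond : ∀ v, v ∉ A →
      ((∀ e ∈ Out v, 2*(t:ℤ) ≤ a e) ∧ (∀ e ∈ Inn v, a e ≤ 2*(t:ℤ))) := by
    intro v hv
    rcases (hloc v).1 with ⟨hc, _, _⟩ | ⟨_, h1, h2⟩
    · exact absurd hc hv
    · exact ⟨h1, h2⟩
  have hedge : ∀ e, e ∉ Mset → (G.tail e ∈ A ↔ G.head e ∉ A) := by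
    intro e heM
    have hane : a e ≠ 2*(t:ℤ) := by
      intro hc
      exact heM (mem_filter.mpr ⟨mem_univ e, hc⟩)
    rcases lt_or_gt_of_ne (hne0 e) with hneg | hpos
    · -- h e < 0 : e leaves head, enters tail
      have heOut : e ∈ Out (G.head e) := by
        simp only [hOut, mem_filter, mem_univ, true_and]
        tauto
      have heInn : e ∈ Inn (G.tail e) := by
        simp only [hInn, mem_filter, mem_univ, true_and]
        tauto
      constructor
      · intro htA
        intro hhA
        have h1 := (hfirst _ htA).2 e heInn
        have h2 := (hfirst _ hhA).1 e heOut
        omega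
      · intro hhA
        by_contra htA
        have h1 := (hsecond _ htA).2 e heInn
        have h2 := (hsecond _ hhA).1 e heOut
        omega
    · -- 0 < h e : e leaves tail, enters head
      have heOut : e ∈ Out (G.tail e) := by
        simp only [hOut, mem_filter, mem_univ, true_and]
        tauto
      have heInn : e ∈ Inn (G.head e) := by
        simp only [hInn, mem_filter, mem_univ, true_and]
        tauto
      constructor
      · intro htA
        intro hhA
        have h1 := (hfirst _ htA).1 e heOut
        have h2 := (hfirst _ hhA).2 e heInn
        omega
      · intro hhA
        by_contra htA
        have h1 := (hsecond _ htA).1 e heOut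
        have h2 := (hsecond _ hhA).2 e heInn
        omega
  set F : Finset G.E := univ.filter (fun e => e ∉ Mset) with hF
  have hbipF : ∀ e ∈ F, (G.tail e ∈ A ↔ G.head e ∉ A) := by
    intro e he
    exact hedge e (mem_filter.mp he).2
  have hdegF : ∀ v, (F.filter (fun e => G.Inc v e)).card = 2*t := by
    intro v
    have hsd : F.filter (fun e => G.Inc v e)
        = (univ.filter (fun e => G.Inc v e)) \ (Mset.filter (fun e => G.Inc v e)) := by
      ext e
      simp only [hF, mem_filter, mem_univ, true_and, Finset.mem_sdiff]
      tauto
    have hsub : Mset.filter (fun e => G.Inc v e) ⊆ univ.filter (fun e => G.Inc v e) :=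
      Finset.filter_subset_filter _ (Finset.subset_univ _)
    rw [hsd, Finset.card_sdiff_of_subset hsub, ← degree_eq_card_filter v, hreg v, hMone v]
    omega
  obtain ⟨c', hc'lt, hc'prop⟩ := koenig G A (2*t) F hbipF hdegF
  have hclt : ∀ e, e ∉ Mset → c' e < 2*t :=
    fun e he => hc'lt e (mem_filter.mpr ⟨mem_univ e, he⟩)
  -- the final coloring
  set C : G.E → Fin (2*t+1) := fun e =>
    if hm : e ∈ Mset then ⟨2*t, by omega⟩ else ⟨c' e, by have := hclt e hm; omega⟩ with hC
  have hproper : G.IsProperEdgeColoring C := by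
    intro e e' hadj
    obtain ⟨hne, v, hv, hv'⟩ := hadj
    by_cases h1 : e ∈ Mset <;> by_cases h2 : e' ∈ Mset
    · exfalso
      have hsub2 : ({e, e'} : Finset G.E) ⊆ Mset.filter (fun x => G.Inc v x) := by
        intro x hx
        rcases Finset.mem_insert.mp hx with rfl | hx
        · exact mem_filter.mpr ⟨h1, hv⟩
        · rw [Finset.mem_singleton.mp hx]
          exact mem_filter.mpr ⟨h2, hv'⟩
      have := (Finset.card_le_card hsub2).trans (le_of_eq (hMone v))
      rw [Finset.card_pair hne] at this
      omega
    · intro hCeq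
      have := congrArg Fin.val hCeq
      simp only [hC, h1, h2, dif_pos, dif_neg, not_false_iff] at this
      have := hclt e' h2
      omega
    · intro hCeq
      have := congrArg Fin.val hCeq
      simp only [hC, h1, h2, dif_pos, dif_neg, not_false_iff] at this
      have := hclt e h1
      omega
    · intro hCeq
      have := congrArg Fin.val hCeq
      simp only [hC, h1, h2, dif_neg, not_false_iff] at this
      exact hc'prop e e' (mem_filter.mpr ⟨mem_univ e, h1⟩) (mem_filter.mpr ⟨mem_univ e', h2⟩)
        hne ⟨v, hv, hv'⟩ this
  -- chromatic index = 2t+1 = max degree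
  have hmemS : (2*t+1) ∈ {k | ∃ c : G.E → Fin k, G.IsProperEdgeColoring c} := ⟨C, hproper⟩
  have hlb : ∀ k ∈ {k | ∃ c : G.E → Fin k, G.IsProperEdgeColoring c}, 2*t+1 ≤ k := by
    rintro k ⟨c, hc⟩
    obtain ⟨v⟩ := hV
    have hinj : Function.Injective (fun x : {e : G.E // G.Inc v e} => c x.1) := by
      intro x y hxy
      by_contra hne
      have hxy' : x.1 ≠ y.1 := fun hc' => hne (Subtype.ext hc')
      exact hc x.1 y.1 ⟨hxy', v, x.2, y.2⟩ hxy
    have hle := Fintype.card_le_of_injective _ hinj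
    rw [Fintype.card_fin] at hle
    have hcard : Fintype.card {e : G.E // G.Inc v e} = 2*t+1 := by
      rw [← Nat.card_eq_fintype_card]
      exact hreg v
    omega
  have hchi : G.chromaticIndex = 2*t+1 := by
    unfold Multigraph.chromaticIndex
    exact le_antisymm (Nat.sInf_le hmemS) (le_csInf ⟨_, hmemS⟩ hlb)
  have hmax : G.maxDegree = 2*t+1 := by
    unfold Multigraph.maxDegree
    have : Set.range G.degree = {2*t+1} := by
      ext n
      simp only [Set.mem_range, Set.mem_singleton_iff]
      constructor
      · rintro ⟨v, rfl⟩; exact hreg v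
      · rintro rfl
        obtain ⟨v⟩ := hV
        exact ⟨v, hreg v⟩
    rw [this, csSup_singleton]
  unfold Multigraph.IsClass1
  rw [hchi, hmax]

end MGaux2

/-- For every integer `t ≥ 1`, every bridgeless `(2t+1)`-regular
class 2 multigraph `G` satisfies `φ_c(G) > 2 + 2/(2t-1)`. -/
theorem statement_2 (t : ℕ) (ht : 1 ≤ t) (G : Multigraph)
    (hbl : G.Bridgeless) (hreg : G.IsRegular (2 * t + 1)) (hcl : G.IsClass2) :
    ((2 + 2 / (2 * (t : ℝ) - 1) : ℝ) : EReal) < G.flowNumber := by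
  classical
  by_contra hnlt
  push_neg at hnlt
  apply hcl
  rcases isEmpty_or_nonempty G.V with hV | hV
  · -- no vertices: trivially class 1
    have hE : IsEmpty G.E := ⟨fun e => hV.false (G.tail e)⟩
    have hchi : G.chromaticIndex = 0 := by
      have h0 : 0 ∈ {k | ∃ c : G.E → Fin k, G.IsProperEdgeColoring c} :=
        ⟨fun e => hE.elim e, fun e => hE.elim e⟩
      exact Nat.le_zero.mp (Nat.sInf_le h0)
    have hmax : G.maxDegree = 0 := by
      unfold Multigraph.maxDegree
      rw [Set.range_eq_empty G.degree, csSup_empty]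
      rfl
    unfold Multigraph.IsClass1
    rw [hchi, hmax]
  · set thr : ℝ := 2 + 2 / (2 * (t : ℝ) - 1) with hthr
    have htR : (1:ℝ) ≤ (t:ℝ) := by exact_mod_cast ht
    have htpos : (0:ℝ) < 2*(t:ℝ)-1 := by linarith
    have hflows : ∀ n : ℕ, ∃ f : G.E → ℝ,
        (∀ e, 1 ≤ |f e| ∧ |f e| ≤ thr - 1 + 1/((n:ℝ)+1)) ∧ MGaux2.Conserv G f := by
      intro n
      have hlt2 : G.flowNumber < ((thr + 1/((n:ℝ)+1) : ℝ) : EReal) := by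
        refine lt_of_le_of_lt hnlt ?_
        rw [EReal.coe_lt_coe_iff]
        have hp : 0 < 1/((n:ℝ)+1) := by positivity
        linarith
      unfold Multigraph.flowNumber at hlt2
      obtain ⟨x, hxS, hxlt⟩ := sInf_lt_iff.mp hlt2
      obtain ⟨r, rfl, hr2, f, hfb, hfc⟩ := hxS
      have hrlt : r < thr + 1/((n:ℝ)+1) := by exact_mod_cast hxlt
      refine ⟨f, fun e => ⟨(hfb e).1, le_trans (hfb e).2 (by linarith)⟩, ?_⟩
      exact ((MGaux2.isNZFlow_iff G r f).mp ⟨hfb, hfc⟩).2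
    have hPc : IsClosed {f : G.E → ℝ | MGaux2.Conserv G f} := by
      have hrw : {f : G.E → ℝ | MGaux2.Conserv G f} =
          ⋂ v, {f : G.E → ℝ |
            (∑ e ∈ Finset.univ.filter (fun e => G.tail e = v), f e)
            = ∑ e ∈ Finset.univ.filter (fun e => G.head e = v), f e} := by
        ext f
        simp only [Set.mem_setOf_eq, Set.mem_iInter, MGaux2.Conserv]
      rw [hrw]
      refine isClosed_iInter fun v => isClosed_eq ?_ ?_ <;>
        exact continuous_finset_sum _ (fun e _ => continuous_apply e)
    obtain ⟨f, hfb, hfc⟩ := MG_flow_limit (MGaux2.Conserv G) hPc thr hflows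
    have hscaled : ∃ g : G.E → ℝ, MGaux2.Conserv G g ∧
        ∀ e, ((2*(t:ℤ)-1 : ℤ):ℝ) ≤ |g e| ∧ |g e| ≤ ((2*(t:ℤ)+1 : ℤ):ℝ) := by
      refine ⟨fun e => (2*(t:ℝ)-1) * f e, ?_, ?_⟩
      · intro v
        show ∑ e ∈ Finset.univ.filter (fun e => G.tail e = v), (2*(t:ℝ)-1) * f e
            = ∑ e ∈ Finset.univ.filter (fun e => G.head e = v), (2*(t:ℝ)-1) * f e
        rw [← Finset.mul_sum, ← Finset.mul_sum, hfc v]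
      · intro e
        have h1 := (hfb e).1
        have h2 := (hfb e).2
        have habs : |(2*(t:ℝ)-1) * f e| = (2*(t:ℝ)-1) * |f e| := by
          rw [abs_mul, abs_of_pos htpos]
        push_cast
        rw [habs]
        have hth : (2*(t:ℝ)-1) * (thr - 1) = 2*(t:ℝ)+1 := by
          rw [hthr]
          field_simp
          ring
        constructor
        · nlinarith
        · nlinarith
    have hLge : (1:ℤ) ≤ 2*(t:ℤ)-1 := by
      have : (1:ℤ) ≤ (t:ℤ) := by exact_mod_cast ht
      omega
    obtain ⟨hZ, hZc, hZb⟩ := MGaux2.rounding G (2*(t:ℤ)-1) (2*(t:ℤ)+1) hLge hscaled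
    exact MGaux2.main_class1 G t ht hreg hV ⟨hZ, hZc, hZb⟩
end

section
/- Let G be a bridgeless cubic graph, let r ∈ (4,5), let (B, W) be an r-bipartition of G, and let M be a perfect matching of G every edge of which has one end in B and the other in W. Then for every integer t ≥ 1, the (2t+1)-regular multigraph G + (2t−2)M admits a nowhere-zero (2 + 2(r−2)/(r + (2t−3)(r−2)))-flow; in particular φ_c(G + (2t−2)M) ≤ 2 + 2(r−2)/(r + (2t−3)(r−2)). -/
section NZAuxSection
namespace NZAux
set_option linter.unusedSectionVars false
set_option linter.unnecessarySeqFocus false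


open Finset

variable {V E : Type} [Fintype V] [Fintype E]

/-- net inflow at `v` -/
noncomputable def exc (tl hd : E → V) [DecidableEq V] (f : E → ℝ) (v : V) : ℝ :=
  ∑ e : E, f e * ((if hd e = v then 1 else 0) - (if tl e = v then 1 else 0))

variable [DecidableEq V]

lemma exc_add_smul (tl hd : E → V) (f g : E → ℝ) (c : ℝ) (v : V) :
    exc tl hd (fun e => f e + c * g e) v = exc tl hd f v + c * exc tl hd g v := by
  simp only [exc, add_mul, mul_assoc]
  rw [Finset.sum_add_distrib, ← Finset.mul_sum]

lemma sum_exc (tl hd : E → V) (f : E → ℝ) :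
    ∑ v : V, exc tl hd f v = 0 := by
  unfold exc
  rw [Finset.sum_comm]
  refine Finset.sum_eq_zero fun e _ => ?_
  rw [← Finset.mul_sum, Finset.sum_sub_distrib, Finset.sum_ite_eq, Finset.sum_ite_eq]
  simp

lemma sum_exc_mem (tl hd : E → V) (f : E → ℝ) (X : Finset V) :
    ∑ v ∈ X, exc tl hd f v
      = ∑ e : E, f e * ((if hd e ∈ X then 1 else 0) - (if tl e ∈ X then 1 else 0)) := by
  unfold exc
  rw [Finset.sum_comm]
  refine Finset.sum_congr rfl fun e _ => ?_
  rw [← Finset.mul_sum, Finset.sum_sub_distrib, Finset.sum_ite_eq, Finset.sum_ite_eq]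

lemma exc_single (tl hd : E → V) [DecidableEq E] (e : E) (v : V) :
    exc tl hd (fun x => if x = e then 1 else 0) v
      = (if hd e = v then 1 else 0) - (if tl e = v then 1 else 0) := by
  unfold exc
  rw [Finset.sum_eq_single e]
  · simp
  · intro x _ hx; simp [hx]
  · simp

lemma walk_flow (tl hd : E → V) [DecidableEq E] (lo hi f : E → ℝ) (Step : V → V → Prop)
    (hStep : ∀ u w, Step u w → ∃ e,
      (tl e = u ∧ hd e = w ∧ f e < hi e) ∨ (tl e = w ∧ hd e = u ∧ lo e < f e))
    (a b : V) (hab : Relation.ReflTransGen Step a b) :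
    ∃ (g : E → ℤ) (n : ℕ),
      (∀ v, exc tl hd (fun e => (g e : ℝ)) v
          = (if b = v then 1 else 0) - (if a = v then 1 else 0)) ∧
      (∀ e, |g e| ≤ (n : ℤ)) ∧ (∀ e, 0 < g e → f e < hi e) ∧
      (∀ e, g e < 0 → lo e < f e) := by
  induction hab with
  | refl =>
    refine ⟨fun _ => 0, 0, fun v => ?_, by simp, by simp, by simp⟩
    simp [exc]
  | @tail c b hac hcb ih =>
    obtain ⟨g, n, hexc, hbd, hpos, hneg⟩ := ih
    obtain ⟨e, he⟩ := hStep c b hcb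
    rcases he with ⟨htl, hhd, hfe⟩ | ⟨htl, hhd, hfe⟩
    · refine ⟨fun x => g x + (if x = e then 1 else 0), n + 1, fun v => ?_, fun x => ?_,
        fun x hx => ?_, fun x hx => ?_⟩
      · have : (fun x => ((g x + (if x = e then 1 else 0) : ℤ) : ℝ))
            = fun x => (g x : ℝ) + 1 * (if x = e then 1 else 0) := by
          funext x; push_cast; split <;> ring
        rw [this, exc_add_smul, hexc, exc_single, htl, hhd]
        ring
      · rcases eq_or_ne x e with rfl | hxe
        · simp only [if_pos rfl]
          have h1 := hbd x
          rw [abs_le] at h1 ⊢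
          push_cast
          omega
        · simp only [if_neg hxe, add_zero]
          exact le_trans (hbd x) (by exact_mod_cast Nat.le_succ n)
      · rcases eq_or_ne x e with rfl | hxe
        · exact hfe
        · simp only [if_neg hxe, add_zero] at hx; exact hpos x hx
      · rcases eq_or_ne x e with rfl | hxe
        · simp only [if_pos rfl] at hx; exact hneg x (by omega)
        · simp only [if_neg hxe, add_zero] at hx; exact hneg x hx
    · refine ⟨fun x => g x - (if x = e then 1 else 0), n + 1, fun v => ?_, fun x => ?_,
        fun x hx => ?_, fun x hx => ?_⟩
      · have : (fun x => ((g x - (if x = e then 1 else 0) : ℤ) : ℝ))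
            = fun x => (g x : ℝ) + (-1) * (if x = e then 1 else 0) := by
          funext x; push_cast; split <;> ring
        rw [this, exc_add_smul, hexc, exc_single, htl, hhd]
        ring
      · rcases eq_or_ne x e with rfl | hxe
        · simp only [if_pos rfl]
          have h1 := hbd x
          rw [abs_le] at h1 ⊢
          push_cast
          omega
        · simp only [if_neg hxe, sub_zero]
          exact le_trans (hbd x) (by exact_mod_cast Nat.le_succ n)
      · rcases eq_or_ne x e with rfl | hxe
        · simp only [if_pos rfl] at hx; exact hpos x (by omega)
        · simp only [if_neg hxe, sub_zero] at hx; exact hpos x hx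
      · rcases eq_or_ne x e with rfl | hxe
        · exact hfe
        · simp only [if_neg hxe, sub_zero] at hx; exact hneg x hx


set_option maxHeartbeats 1000000 in
theorem hoffman (tl hd : E → V) (lo hi : E → ℝ) (hlh : ∀ e, lo e ≤ hi e)
    (hcut : ∀ X : Finset V,
      (∑ e : E, if hd e ∈ X ∧ tl e ∉ X then lo e else 0) ≤
      (∑ e : E, if tl e ∈ X ∧ hd e ∉ X then hi e else 0)) :
    ∃ f : E → ℝ, (∀ e, lo e ≤ f e ∧ f e ≤ hi e) ∧ ∀ v, exc tl hd f v = 0 := by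
  classical
  set K : Set (E → ℝ) := Set.univ.pi fun e => Set.Icc (lo e) (hi e) with hK
  have hKc : IsCompact K := isCompact_univ_pi fun e => isCompact_Icc
  have hKne : K.Nonempty := ⟨lo, fun e _ => ⟨le_refl _, hlh e⟩⟩
  set Φ : (E → ℝ) → ℝ := fun f => ∑ v : V, max (exc tl hd f v) 0 with hΦ
  have hcont : Continuous Φ := by
    refine continuous_finset_sum _ fun v _ => Continuous.max ?_ continuous_const
    exact continuous_finset_sum _ fun e _ => (continuous_apply e).mul continuous_const
  obtain ⟨f₀, hf₀K, hmin⟩ := hKc.exists_isMinOn hKne hcont.continuousOn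
  have hbox : ∀ e, lo e ≤ f₀ e ∧ f₀ e ≤ hi e := fun e => hf₀K e (Set.mem_univ e)
  refine ⟨f₀, hbox, ?_⟩
  have hsum0 : ∑ v : V, exc tl hd f₀ v = 0 := sum_exc tl hd f₀
  by_cases hle : ∀ v, exc tl hd f₀ v ≤ 0
  · intro v
    exact (Finset.sum_eq_zero_iff_of_nonpos (fun v _ => hle v)).1 hsum0 v (mem_univ v)
  push_neg at hle
  obtain ⟨v₀, hv₀⟩ := hle
  exfalso
  set Step : V → V → Prop := fun u w => ∃ e,
    (tl e = u ∧ hd e = w ∧ f₀ e < hi e) ∨ (tl e = w ∧ hd e = u ∧ lo e < f₀ e) with hStepDef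
  set S : Set V := {w | Relation.ReflTransGen Step v₀ w} with hS
  have hv₀S : v₀ ∈ S := Relation.ReflTransGen.refl
  by_cases hneg : ∃ w ∈ S, exc tl hd f₀ w < 0
  · -- Case A: augment along a walk
    obtain ⟨w, hwS, hw⟩ := hneg
    obtain ⟨g, n, hexc, hbd, hgpos, hgneg⟩ :=
      walk_flow tl hd lo hi f₀ Step (fun u w h => h) v₀ w hwS
    have hEne : (univ : Finset E).Nonempty := by
      by_contra hE
      rw [not_nonempty_iff_eq_empty] at hE
      have : exc tl hd f₀ v₀ = 0 := by unfold exc; rw [hE]; simp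
      rw [this] at hv₀; exact lt_irrefl _ hv₀
    have hn1 : (0:ℝ) < (n:ℝ) + 1 := by positivity
    set slack : E → ℝ := fun e =>
      if 0 < g e then (hi e - f₀ e) / ((n:ℝ) + 1)
      else if g e < 0 then (f₀ e - lo e) / ((n:ℝ) + 1) else 1 with hslackdef
    have hslack : ∀ e, 0 < slack e := by
      intro e
      simp only [hslackdef]
      split
      · exact div_pos (by linarith [hgpos e ‹0 < g e›]) hn1
      · split
        · exact div_pos (by linarith [hgneg e ‹g e < 0›]) hn1
        · norm_num
    set δ : ℝ := min (exc tl hd f₀ v₀) (min (-(exc tl hd f₀ w)) (univ.inf' hEne slack))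
      with hδdef
    have hδpos : 0 < δ := by
      refine lt_min hv₀ (lt_min (by linarith) ?_)
      exact (Finset.lt_inf'_iff hEne).2 fun e _ => hslack e
    have hδv₀ : δ ≤ exc tl hd f₀ v₀ := min_le_left _ _
    have hδw : δ ≤ -(exc tl hd f₀ w) := le_trans (min_le_right _ _) (min_le_left _ _)
    have hδs : ∀ e, δ ≤ slack e := fun e =>
      le_trans (le_trans (min_le_right _ _) (min_le_right _ _))
        (Finset.inf'_le _ (mem_univ e))
    set f' : E → ℝ := fun e => f₀ e + δ * (g e : ℝ) with hf'def
    have hgabs : ∀ e, |(g e : ℝ)| ≤ (n:ℝ) + 1 := by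
      intro e
      have h1 := hbd e
      have : ((|g e| : ℤ) : ℝ) ≤ ((n:ℤ):ℝ) + 1 := by exact_mod_cast le_trans h1 (by omega)
      rwa [Int.cast_abs] at this
    have hf'K : f' ∈ K := by
      intro e _
      simp only [hf'def]
      constructor
      · rcases le_or_gt 0 (g e) with hg | hg
        · have : (0:ℝ) ≤ (g e : ℝ) := by exact_mod_cast hg
          nlinarith [(hbox e).1]
        · have hs : δ ≤ (f₀ e - lo e) / ((n:ℝ) + 1) := by
            have h2 := hδs e; simp only [hslackdef] at h2
            rwa [if_neg (by omega), if_pos hg] at h2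
          have h3 : δ * ((n:ℝ) + 1) ≤ f₀ e - lo e := (le_div_iff₀ hn1).1 hs
          have h4 : -((n:ℝ)+1) ≤ (g e : ℝ) := (abs_le.1 (hgabs e)).1
          nlinarith
      · rcases le_or_gt (g e) 0 with hg | hg
        · have : ((g e : ℝ)) ≤ 0 := by exact_mod_cast hg
          nlinarith [(hbox e).2]
        · have hs : δ ≤ (hi e - f₀ e) / ((n:ℝ) + 1) := by
            have h2 := hδs e; simp only [hslackdef] at h2
            rwa [if_pos hg] at h2
          have h3 : δ * ((n:ℝ) + 1) ≤ hi e - f₀ e := (le_div_iff₀ hn1).1 hs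
          have h4 : (g e : ℝ) ≤ (n:ℝ)+1 := (abs_le.1 (hgabs e)).2
          nlinarith
    have hwv₀ : w ≠ v₀ := by intro h; rw [h] at hw; linarith
    have hexcf' : ∀ v, exc tl hd f' v
        = exc tl hd f₀ v + δ * ((if w = v then 1 else 0) - (if v₀ = v then 1 else 0)) := by
      intro v
      have h5 : exc tl hd f' v = exc tl hd f₀ v + δ * exc tl hd (fun e => (g e : ℝ)) v :=
        exc_add_smul tl hd f₀ (fun e => (g e : ℝ)) δ v
      rw [h5, hexc v]
    have hdiff : ∀ v, max (exc tl hd f' v) 0 - max (exc tl hd f₀ v) 0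
        = if v₀ = v then -δ else 0 := by
      intro v
      rcases eq_or_ne v₀ v with rfl | hv
      · rw [if_pos rfl, hexcf', if_neg hwv₀, if_pos rfl]
        rw [max_eq_left (by linarith), max_eq_left (by linarith)]
        ring
      · rw [if_neg hv, hexcf', if_neg (fun h => hv h)]
        rcases eq_or_ne w v with rfl | hw2
        · rw [if_pos rfl]
          rw [max_eq_right (by linarith), max_eq_right (by linarith)]
          ring
        · rw [if_neg hw2]
          ring_nf
    have hΦ' : Φ f' = Φ f₀ - δ := by
      have h6 : Φ f' - Φ f₀ = ∑ v : V, (max (exc tl hd f' v) 0 - max (exc tl hd f₀ v) 0) := by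
        rw [Finset.sum_sub_distrib]
      rw [Finset.sum_congr rfl (fun v _ => hdiff v), Finset.sum_ite_eq] at h6
      simp only [mem_univ, if_pos] at h6
      linarith
    have hmle : Φ f₀ ≤ Φ f' := hmin hf'K
    rw [hΦ'] at hmle
    linarith
  · -- Case B: violated cut
    push_neg at hneg
    set X : Finset V := univ.filter (· ∈ S) with hX
    have hmemX : ∀ v, v ∈ X ↔ v ∈ S := by intro v; simp [hX]
    have key1 : exc tl hd f₀ v₀ ≤ ∑ v ∈ X, exc tl hd f₀ v :=
      Finset.single_le_sum (fun v hv => hneg v ((hmemX v).1 hv)) ((hmemX v₀).2 hv₀S)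
    have key2 := sum_exc_mem tl hd f₀ X
    have key3 : ∑ e : E, f₀ e * ((if hd e ∈ X then 1 else 0) - (if tl e ∈ X then 1 else 0))
        ≤ ∑ e : E, ((if hd e ∈ X ∧ tl e ∉ X then lo e else 0)
            - (if tl e ∈ X ∧ hd e ∉ X then hi e else 0)) := by
      refine Finset.sum_le_sum fun e _ => ?_
      by_cases h1 : tl e ∈ X <;> by_cases h2 : hd e ∈ X
      · simp [h1, h2]
      · have h3 : hi e ≤ f₀ e := by
          by_contra h4
          push_neg at h4
          have : hd e ∈ S := Relation.ReflTransGen.tail ((hmemX _).1 h1)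
            ⟨e, Or.inl ⟨rfl, rfl, h4⟩⟩
          exact h2 ((hmemX _).2 this)
        simp only [eq_true h1, eq_false h2]
        simp
        linarith
      · have h3 : f₀ e ≤ lo e := by
          by_contra h4
          push_neg at h4
          have : tl e ∈ S := Relation.ReflTransGen.tail ((hmemX _).1 h2)
            ⟨e, Or.inr ⟨rfl, rfl, h4⟩⟩
          exact h1 ((hmemX _).2 this)
        simp only [eq_true h2, eq_false h1]
        simp
        linarith
      · simp [h1, h2]
    have key4 : (∑ e : E, ((if hd e ∈ X ∧ tl e ∉ X then lo e else 0)
        - (if tl e ∈ X ∧ hd e ∉ X then hi e else 0))) ≤ 0 := by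
      rw [Finset.sum_sub_distrib]
      have := hcut X
      linarith
    linarith



lemma euler_orient {V E : Type} [Fintype V] [Fintype E] [DecidableEq V] [DecidableEq E]
    (tl hd : E → V) (hnl : ∀ e, tl e ≠ hd e)
    (hdeg2 : ∀ v, (univ.filter (fun e => tl e = v ∨ hd e = v)).card = 2) :
    ∃ etl ehd : E → V,
      (∀ e, (etl e = tl e ∧ ehd e = hd e) ∨ (etl e = hd e ∧ ehd e = tl e)) ∧
      ∀ v, (univ.filter (fun e => etl e = v)).card
          = (univ.filter (fun e => ehd e = v)).card := by
  classical
  set t : E → Finset V := fun e => {tl e, hd e} with ht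
  have hall : ∀ s : Finset E, s.card ≤ (s.biUnion t).card := by
    intro s
    have key : s.card * 2 ≤ (s.biUnion t).card * 2 := by
      refine Finset.card_mul_le_card_mul (fun e v => v ∈ t e) ?_ ?_
      · intro e he
        have hsub : t e ⊆ (s.biUnion t).bipartiteAbove (fun e v => v ∈ t e) e := by
          intro v hv
          rw [Finset.mem_bipartiteAbove]
          exact ⟨Finset.mem_biUnion.2 ⟨e, he, hv⟩, hv⟩
        calc 2 = (t e).card := by
                rw [ht]; exact (Finset.card_pair (hnl e)).symm
          _ ≤ _ := Finset.card_le_card hsub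
      · intro v hv
        have hsub : s.bipartiteBelow (fun e v => v ∈ t e) v
            ⊆ univ.filter (fun e => tl e = v ∨ hd e = v) := by
          intro e he
          rw [Finset.mem_bipartiteBelow] at he
          rw [Finset.mem_filter]
          refine ⟨mem_univ e, ?_⟩
          have := he.2
          rw [ht] at this
          simp only [Finset.mem_insert, Finset.mem_singleton] at this
          rcases this with h | h
          · exact Or.inl h.symm
          · exact Or.inr h.symm
        calc _ ≤ (univ.filter (fun e => tl e = v ∨ hd e = v)).card :=
              Finset.card_le_card hsub
          _ = 2 := hdeg2 v
    omega
  obtain ⟨f, hfinj, hft⟩ := (Finset.all_card_le_biUnion_card_iff_exists_injective t).1 hall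
  -- the chosen tail is f; the head is the other end
  set etl : E → V := f with hetl
  set ehd : E → V := fun e => if f e = tl e then hd e else tl e with hehd
  have hor : ∀ e, (etl e = tl e ∧ ehd e = hd e) ∨ (etl e = hd e ∧ ehd e = tl e) := by
    intro e
    have := hft e
    rw [ht] at this
    simp only [Finset.mem_insert, Finset.mem_singleton] at this
    by_cases h : f e = tl e
    · left; constructor
      · exact h
      · simp only [hehd, if_pos h]
    · right; constructor
      · rcases this with h' | h'
        · exact absurd h' h
        · exact h'
      · simp only [hehd, if_neg h]
  -- counting
  set od : V → ℕ := fun v => (univ.filter (fun e => etl e = v)).card with hod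
  set id' : V → ℕ := fun v => (univ.filter (fun e => ehd e = v)).card with hid
  have hone : ∀ v, od v ≤ 1 := by
    intro v
    rw [hod]
    refine Finset.card_le_one.2 fun e he e' he' => ?_
    rw [Finset.mem_filter] at he he'
    exact hfinj (he.2.trans he'.2.symm)
  have hsum2 : ∀ v, od v + id' v = 2 := by
    intro v
    have hdisj : Disjoint (univ.filter (fun e => etl e = v))
        (univ.filter (fun e => ehd e = v)) := by
      rw [Finset.disjoint_filter]
      intro e _ h1 h2
      rcases hor e with ⟨ha, hb⟩ | ⟨ha, hb⟩ <;>
        exact hnl e (by rw [← ha, ← hb, h1, h2])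
    have hunion : (univ.filter (fun e => etl e = v)) ∪ (univ.filter (fun e => ehd e = v))
        = univ.filter (fun e => tl e = v ∨ hd e = v) := by
      rw [← Finset.filter_or]
      refine Finset.filter_congr fun e _ => ?_
      rcases hor e with ⟨ha, hb⟩ | ⟨ha, hb⟩ <;> rw [ha, hb] <;> tauto
    have hcu : od v + id' v
        = ((univ.filter (fun e => etl e = v)) ∪ (univ.filter (fun e => ehd e = v))).card :=
      (Finset.card_union_of_disjoint hdisj).symm
    rw [hunion, hdeg2 v] at hcu
    exact hcu
  have hsums : ∑ v : V, od v = ∑ v : V, id' v := by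
    rw [hod, hid]
    have h1 : ∑ v : V, (univ.filter (fun e => etl e = v)).card = (univ : Finset E).card :=
      (Finset.card_eq_sum_card_fiberwise (fun e _ => mem_univ (etl e))).symm
    have h2 : ∑ v : V, (univ.filter (fun e => ehd e = v)).card = (univ : Finset E).card :=
      (Finset.card_eq_sum_card_fiberwise (fun e _ => mem_univ (ehd e))).symm
    rw [h1, h2]
  have heq : ∀ v, od v = id' v := by
    by_contra hne
    push_neg at hne
    obtain ⟨v, hv⟩ := hne
    have hlt : od v < id' v := by
      have h1 := hone v
      have h2 := hsum2 v
      omega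
    have : ∑ v : V, od v < ∑ v : V, id' v := by
      refine Finset.sum_lt_sum (fun w _ => ?_) ⟨v, mem_univ v, hlt⟩
      have h1 := hone w
      have h2 := hsum2 w
      omega
    omega
  exact ⟨etl, ehd, hor, heq⟩


end NZAux
end NZAuxSection

/-- if a bridgeless cubic graph `G` has an `r`-bipartition
(`4 < r < 5`) whose color classes are paired by a perfect matching `M`, then for
every `t ≥ 1` the `(2t+1)`-regular multigraph `G + (2t-2)M` admits a
nowhere-zero `(2 + 2(r-2)/(r + (2t-3)(r-2)))`-flow; in particular its circular
flow number is at most this value. -/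
theorem statement_10 (G : Multigraph) (hbl : G.Bridgeless) (hcubic : G.IsRegular 3)
    (r : ℝ) (hr : r ∈ Set.Ioo (4 : ℝ) 5) (B W : Set G.V)
    (hbip : G.IsRBipartition r B W) (M : Set G.E) (hM : G.IsPerfectMatching M)
    (hpair : ∀ e ∈ M, (G.tail e ∈ B ∧ G.head e ∈ W) ∨ (G.tail e ∈ W ∧ G.head e ∈ B))
    (t : ℕ) (ht : 1 ≤ t) :
    (G.addCopies M (2 * t - 2)).HasNZFlow
        (2 + 2 * (r - 2) / (r + (2 * (t : ℝ) - 3) * (r - 2))) ∧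
      (G.addCopies M (2 * t - 2)).flowNumber ≤
        ((2 + 2 * (r - 2) / (r + (2 * (t : ℝ) - 3) * (r - 2)) : ℝ) : EReal) := by
  classical
  obtain ⟨hr4, hr5⟩ := hr
  obtain ⟨hBWu, hBWi, hcutB⟩ := hbip
  letI : Fintype G.V := Fintype.ofFinite _
  letI : Fintype G.E := Fintype.ofFinite _
  letI : Fintype (↥M) := Fintype.ofFinite _
  have hdisj : ∀ v, v ∈ B → v ∈ W → False := by
    intro v hb hw
    have h : v ∈ B ∩ W := ⟨hb, hw⟩
    rw [hBWi] at h
    exact h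
  have hrm2 : (0:ℝ) < r - 2 := by linarith
  have ht1 : (1:ℝ) ≤ (t:ℝ) := by exact_mod_cast ht
  have hden : (0:ℝ) < r + (2 * (t:ℝ) - 3) * (r - 2) := by nlinarith
  set ε : ℝ := 2 * (r - 2) / (r + (2 * (t:ℝ) - 3) * (r - 2)) with hε
  have hεpos : 0 < ε := div_pos (by linarith) hden
  set k : ℕ := 2 * t - 2 with hk
  have hkr : ((k : ℕ) : ℝ) = 2 * (t:ℝ) - 2 := by
    rw [hk, Nat.cast_sub (by omega : 2 ≤ 2 * t)]
    push_cast
    ring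
  have hkey : ε * (r / (r - 2) + (k:ℝ)) = 2 + ε := by
    rw [hε, hkr]
    have h1 : r - 2 ≠ 0 := hrm2.ne'
    have h2 : r + (2 * (t:ℝ) - 3) * (r - 2) ≠ 0 := hden.ne'
    rw [div_add' _ _ _ h1, div_mul_div_comm, add_div' _ _ _ h2,
      div_eq_div_iff (mul_ne_zero h2 h1) h2]
    ring
  -- matching infrastructure
  set ce : G.V → G.E := fun v => Classical.choose (hM v) with hce
  have hceSpec : ∀ v, ce v ∈ M ∧ G.Inc v (ce v) := fun v => (Classical.choose_spec (hM v)).1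
  have hceUniq : ∀ v e, e ∈ M → G.Inc v e → e = ce v :=
    fun v e h1 h2 => (Classical.choose_spec (hM v)).2 e ⟨h1, h2⟩
  set Bnd : G.E → G.V := fun e => if G.tail e ∈ B then G.tail e else G.head e with hBnd
  set Wnd : G.E → G.V := fun e => if G.tail e ∈ B then G.head e else G.tail e with hWnd
  have hBndM : ∀ e, e ∈ M → (Bnd e ∈ B ∧ Wnd e ∈ W ∧
      ((Bnd e = G.tail e ∧ Wnd e = G.head e) ∨ (Bnd e = G.head e ∧ Wnd e = G.tail e))) := by
    intro e he
    rcases hpair e he with ⟨h1, h2⟩ | ⟨h1, h2⟩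
    · have hb : Bnd e = G.tail e := by rw [hBnd]; simp only [if_pos h1]
      have hw : Wnd e = G.head e := by rw [hWnd]; simp only [if_pos h1]
      rw [hb, hw]
      exact ⟨h1, h2, Or.inl ⟨rfl, rfl⟩⟩
    · have hcond : ¬ (G.tail e ∈ B) := fun hb => hdisj _ hb h1
      have hb : Bnd e = G.head e := by rw [hBnd]; simp only [if_neg hcond]
      have hw : Wnd e = G.tail e := by rw [hWnd]; simp only [if_neg hcond]
      rw [hb, hw]
      exact ⟨h2, h1, Or.inr ⟨rfl, rfl⟩⟩
  have hIncBnd : ∀ e, G.Inc (Bnd e) e := by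
    intro e
    rw [hBnd]
    by_cases h : G.tail e ∈ B
    · simp only [if_pos h]; exact Or.inl rfl
    · simp only [if_neg h]; exact Or.inr rfl
  have hIncWnd : ∀ e, G.Inc (Wnd e) e := by
    intro e
    rw [hWnd]
    by_cases h : G.tail e ∈ B
    · simp only [if_pos h]; exact Or.inr rfl
    · simp only [if_neg h]; exact Or.inl rfl
  have hBndCe : ∀ v, v ∈ B → Bnd (ce v) = v := by
    intro v hv
    obtain ⟨he, hi⟩ := hceSpec v
    obtain ⟨hBB, hWW, hor⟩ := hBndM (ce v) he
    rcases hor with ⟨h1, h2⟩ | ⟨h1, h2⟩ <;> rcases hi with h3 | h3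
    · rw [h1, h3]
    · exact ((hdisj v hv (by rw [← h3, ← h2]; exact hWW))).elim
    · exact ((hdisj v hv (by rw [← h3, ← h2]; exact hWW))).elim
    · rw [h1, h3]
  have hWndCe : ∀ v, v ∈ W → Wnd (ce v) = v := by
    intro v hv
    obtain ⟨he, hi⟩ := hceSpec v
    obtain ⟨hBB, hWW, hor⟩ := hBndM (ce v) he
    rcases hor with ⟨h1, h2⟩ | ⟨h1, h2⟩ <;> rcases hi with h3 | h3
    · exact ((hdisj v (by rw [← h3, ← h1]; exact hBB) hv)).elim
    · rw [h2, h3]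
    · rw [h2, h3]
    · exact ((hdisj v (by rw [← h3, ← h1]; exact hBB) hv)).elim
  -- bijections between M and B, W
  set eB : ↥M ≃ {v : G.V // v ∈ B} :=
    { toFun := fun e => ⟨Bnd e.1, (hBndM e.1 e.2).1⟩
      invFun := fun v => ⟨ce v.1, (hceSpec v.1).1⟩
      left_inv := fun e => Subtype.ext (hceUniq (Bnd e.1) e.1 e.2 (hIncBnd e.1)).symm
      right_inv := fun v => Subtype.ext (hBndCe v.1 v.2) } with heB
  set eW : ↥M ≃ {v : G.V // v ∈ W} :=
    { toFun := fun e => ⟨Wnd e.1, (hBndM e.1 e.2).2.1⟩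
      invFun := fun v => ⟨ce v.1, (hceSpec v.1).1⟩
      left_inv := fun e => Subtype.ext (hceUniq (Wnd e.1) e.1 e.2 (hIncWnd e.1)).symm
      right_inv := fun v => Subtype.ext (hWndCe v.1 v.2) } with heW
  -- counting helper
  have hsum_count : ∀ {α : Type} [Fintype α] (φ : α → G.V) (X : Finset G.V),
      (∑ a : α, if φ a ∈ X then (1:ℝ) else 0)
        = ∑ v ∈ X, (((Finset.univ.filter fun a => φ a = v).card : ℕ) : ℝ) := by
    intro α _ φ X
    have h1 : ∀ a : α, (if φ a ∈ X then (1:ℝ) else 0)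
        = ∑ v ∈ X, (if φ a = v then (1:ℝ) else 0) :=
      fun a => (Finset.sum_ite_eq X (φ a) fun _ => (1:ℝ)).symm
    rw [Finset.sum_congr rfl fun a _ => h1 a, Finset.sum_comm]
    exact Finset.sum_congr rfl fun v _ => by rw [Finset.sum_boole]
  -- degree facts
  have hdeg3 : ∀ v, (Finset.univ.filter fun e : G.E => G.Inc v e).card = 3 := by
    intro v
    have h0 := hcubic v
    rwa [Multigraph.degree, Nat.card_eq_fintype_card, Fintype.card_subtype] at h0
  have hM1 : ∀ v, (Finset.univ.filter fun e : G.E => G.Inc v e ∧ e ∈ M).card = 1 := by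
    intro v
    rw [Finset.card_eq_one]
    refine ⟨ce v, ?_⟩
    ext e
    simp only [Finset.mem_filter, Finset.mem_singleton, Finset.mem_univ, true_and]
    constructor
    · rintro ⟨h1, h2⟩; exact hceUniq v e h2 h1
    · rintro rfl; exact ⟨(hceSpec v).2, (hceSpec v).1⟩
  have hdeg2 : ∀ v, (Finset.univ.filter
      fun e : {e : G.E // e ∉ M} => G.tail e.1 = v ∨ G.head e.1 = v).card = 2 := by
    intro v
    have h2 : (Finset.univ.filter fun e : G.E => G.Inc v e ∧ e ∉ M).card = 2 := by
      have hsplit := Finset.card_filter_add_card_filter_not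
        (s := Finset.univ.filter fun e : G.E => G.Inc v e) (p := fun e => e ∈ M)
      rw [Finset.filter_filter, Finset.filter_filter, hdeg3 v] at hsplit
      have h3 := hM1 v
      omega
    rw [← h2]
    refine Finset.card_bij (fun e _ => e.1) ?_ ?_ ?_
    · intro e he
      rw [Finset.mem_filter] at he ⊢
      exact ⟨Finset.mem_univ _, he.2, e.2⟩
    · intro e1 h1 e2 h2 h
      exact Subtype.ext h
    · intro e he
      rw [Finset.mem_filter] at he
      exact ⟨⟨e, he.2.2⟩, by rw [Finset.mem_filter]; exact ⟨Finset.mem_univ _, he.2.1⟩, rfl⟩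
  obtain ⟨netl, nehd, hnor, hnbal⟩ := NZAux.euler_orient
    (fun e : {e : G.E // e ∉ M} => G.tail e.1) (fun e => G.head e.1)
    (fun e => G.no_loop e.1) hdeg2
  -- orientation of the big graph
  set base : G.E ⊕ ((i : Fin k) × ↥M) → G.E := Sum.elim id (fun p => p.2.1) with hbase
  set etl : G.E ⊕ ((i : Fin k) × ↥M) → G.V := Sum.elim
      (fun e => if h : e ∈ M then Bnd e else netl ⟨e, h⟩)
      (fun p => if p.1.val < t - 1 then Bnd p.2.1 else Wnd p.2.1) with hetl
  set ehd : G.E ⊕ ((i : Fin k) × ↥M) → G.V := Sum.elim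
      (fun e => if h : e ∈ M then Wnd e else nehd ⟨e, h⟩)
      (fun p => if p.1.val < t - 1 then Wnd p.2.1 else Bnd p.2.1) with hehd
  have hpairH : ∀ ee, (etl ee = G.tail (base ee) ∧ ehd ee = G.head (base ee))
      ∨ (etl ee = G.head (base ee) ∧ ehd ee = G.tail (base ee)) := by
    rintro (e | ⟨i, e⟩)
    · simp only [hetl, hehd, hbase, Sum.elim_inl, id_eq]
      by_cases h : e ∈ M
      · rw [dif_pos h, dif_pos h]
        exact (hBndM e h).2.2
      · rw [dif_neg h, dif_neg h]
        exact hnor ⟨e, h⟩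
    · simp only [hetl, hehd, hbase, Sum.elim_inr]
      by_cases h : i.val < t - 1
      · rw [if_pos h, if_pos h]
        exact (hBndM e.1 e.2).2.2
      · rw [if_neg h, if_neg h]
        rcases (hBndM e.1 e.2).2.2 with ⟨h1, h2⟩ | ⟨h1, h2⟩
        · exact Or.inr ⟨h2, h1⟩
        · exact Or.inl ⟨h2, h1⟩
  -- the cut condition
  have hcond : ∀ X : Finset G.V,
      (∑ ee : G.E ⊕ ((i : Fin k) × ↥M), if ehd ee ∈ X ∧ etl ee ∉ X then (1:ℝ) else 0)
        ≤ ∑ ee : G.E ⊕ ((i : Fin k) × ↥M), if etl ee ∈ X ∧ ehd ee ∉ X then (1 + ε) else 0 := by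
    intro X
    set SMB : ℝ := ∑ e : ↥M, (if Bnd e.1 ∈ X then (1:ℝ) else 0) with hSMB
    set SMW : ℝ := ∑ e : ↥M, (if Wnd e.1 ∈ X then (1:ℝ) else 0) with hSMW
    set CMr : ℝ := ∑ e : ↥M, (if ¬(G.tail e.1 ∈ X ↔ G.head e.1 ∈ X) then (1:ℝ) else 0) with hCMr
    set CGr : ℝ := ∑ e : G.E, (if ¬(G.tail e ∈ X ↔ G.head e ∈ X) then (1:ℝ) else 0) with hCGr
    set a : ℝ := ∑ ee : G.E ⊕ ((i : Fin k) × ↥M),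
      (if etl ee ∈ X ∧ ehd ee ∉ X then (1:ℝ) else 0) with ha
    set b : ℝ := ∑ ee : G.E ⊕ ((i : Fin k) × ↥M),
      (if ehd ee ∈ X ∧ etl ee ∉ X then (1:ℝ) else 0) with hb
    have hD : a - b = SMB - SMW := by
      have h1 : a - b = ∑ ee : G.E ⊕ ((i : Fin k) × ↥M),
          ((if etl ee ∈ X then (1:ℝ) else 0) - (if ehd ee ∈ X then 1 else 0)) := by
        rw [ha, hb, ← Finset.sum_sub_distrib]
        refine Finset.sum_congr rfl fun ee _ => ?_
        by_cases hx : etl ee ∈ X <;> by_cases hy : ehd ee ∈ X <;> simp [hx, hy]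
      rw [h1, Fintype.sum_sum_type]
      have hinl : (∑ e : G.E, ((if etl (Sum.inl e) ∈ X then (1:ℝ) else 0)
          - (if ehd (Sum.inl e) ∈ X then 1 else 0))) = SMB - SMW := by
        rw [← Finset.sum_filter_add_sum_filter_not Finset.univ (fun e : G.E => e ∈ M)]
        have hA : (∑ e ∈ Finset.univ.filter (fun e : G.E => e ∈ M),
            ((if etl (Sum.inl e) ∈ X then (1:ℝ) else 0)
              - (if ehd (Sum.inl e) ∈ X then 1 else 0))) = SMB - SMW := by
          have h4 : ∀ e ∈ Finset.univ.filter (fun e : G.E => e ∈ M),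
              ((if etl (Sum.inl e) ∈ X then (1:ℝ) else 0)
                - (if ehd (Sum.inl e) ∈ X then 1 else 0))
              = ((if Bnd e ∈ X then (1:ℝ) else 0) - (if Wnd e ∈ X then 1 else 0)) := by
            intro e he
            have hm := (Finset.mem_filter.1 he).2
            simp only [hetl, hehd, Sum.elim_inl, dif_pos hm]
          rw [Finset.sum_congr rfl h4,
            Finset.sum_subtype (p := fun e : G.E => e ∈ M) _ (by simp)
              (fun e => (if Bnd e ∈ X then (1:ℝ) else 0) - (if Wnd e ∈ X then 1 else 0)),
            Finset.sum_sub_distrib, hSMB, hSMW]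
        have hB : (∑ e ∈ Finset.univ.filter (fun e : G.E => ¬ e ∈ M),
            ((if etl (Sum.inl e) ∈ X then (1:ℝ) else 0)
              - (if ehd (Sum.inl e) ∈ X then 1 else 0))) = 0 := by
          rw [Finset.sum_subtype (p := fun e : G.E => ¬ e ∈ M) _ (by simp)
            (fun e => (if etl (Sum.inl e) ∈ X then (1:ℝ) else 0)
              - (if ehd (Sum.inl e) ∈ X then 1 else 0))]
          have h5 : ∀ e : {e : G.E // ¬ e ∈ M},
              ((if etl (Sum.inl e.1) ∈ X then (1:ℝ) else 0)
                - (if ehd (Sum.inl e.1) ∈ X then 1 else 0))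
              = ((if netl e ∈ X then (1:ℝ) else 0) - (if nehd e ∈ X then 1 else 0)) := by
            intro e
            simp only [hetl, hehd, Sum.elim_inl, dif_neg e.2]
          rw [Finset.sum_congr rfl fun e _ => h5 e, Finset.sum_sub_distrib,
            hsum_count netl X, hsum_count nehd X, sub_eq_zero]
          exact Finset.sum_congr rfl fun v _ => by rw [hnbal v]
        rw [hA, hB, add_zero]
      have hinr : (∑ p : (i : Fin k) × ↥M, ((if etl (Sum.inr p) ∈ X then (1:ℝ) else 0)
          - (if ehd (Sum.inr p) ∈ X then 1 else 0))) = 0 := by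
        rw [← Finset.univ_sigma_univ, Finset.sum_sigma]
        have h6 : ∀ i : Fin k, (∑ e : ↥M, ((if etl (Sum.inr ⟨i, e⟩) ∈ X then (1:ℝ) else 0)
            - (if ehd (Sum.inr ⟨i, e⟩) ∈ X then 1 else 0)))
            = (if i.val < t - 1 then SMB - SMW else SMW - SMB) := by
          intro i
          by_cases hi : i.val < t - 1
          · rw [if_pos hi]
            have h7 : ∀ e : ↥M, ((if etl (Sum.inr ⟨i, e⟩) ∈ X then (1:ℝ) else 0)
                - (if ehd (Sum.inr ⟨i, e⟩) ∈ X then 1 else 0))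
                = ((if Bnd e.1 ∈ X then (1:ℝ) else 0) - (if Wnd e.1 ∈ X then 1 else 0)) := by
              intro e
              simp only [hetl, hehd, Sum.elim_inr, if_pos hi]
            rw [Finset.sum_congr rfl fun e _ => h7 e, Finset.sum_sub_distrib, hSMB, hSMW]
          · rw [if_neg hi]
            have h7 : ∀ e : ↥M, ((if etl (Sum.inr ⟨i, e⟩) ∈ X then (1:ℝ) else 0)
                - (if ehd (Sum.inr ⟨i, e⟩) ∈ X then 1 else 0))
                = ((if Wnd e.1 ∈ X then (1:ℝ) else 0) - (if Bnd e.1 ∈ X then 1 else 0)) := by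
              intro e
              simp only [hetl, hehd, Sum.elim_inr, if_neg hi]
            rw [Finset.sum_congr rfl fun e _ => h7 e, Finset.sum_sub_distrib, hSMB, hSMW]
        rw [Finset.sum_congr rfl fun i _ => h6 i, Finset.sum_ite, Finset.sum_const,
          Finset.sum_const]
        have hc1 : (Finset.univ.filter fun i : Fin k => i.val < t - 1).card = t - 1 := by
          rw [Finset.card_filter,
            Fin.sum_univ_eq_sum_range (fun i => if i < t - 1 then 1 else 0) k,
            ← Finset.card_filter]
          have h8 : (Finset.range k).filter (fun i => i < t - 1) = Finset.range (t - 1) := by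
            ext i
            simp only [Finset.mem_filter, Finset.mem_range]
            omega
          rw [h8, Finset.card_range]
        have hc2 : (Finset.univ.filter fun i : Fin k => ¬ i.val < t - 1).card = t - 1 := by
          have hs := Finset.card_filter_add_card_filter_not
            (s := (Finset.univ : Finset (Fin k))) (p := fun i : Fin k => i.val < t - 1)
          rw [Finset.card_univ, Fintype.card_fin, hc1] at hs
          omega
        rw [hc1, hc2, nsmul_eq_mul, nsmul_eq_mul]
        ring
      rw [hinl, hinr, add_zero]
    have hC : a + b = CGr + (k : ℝ) * CMr := by
      have h1 : a + b = ∑ ee : G.E ⊕ ((i : Fin k) × ↥M),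
          (if ¬(G.tail (base ee) ∈ X ↔ G.head (base ee) ∈ X) then (1:ℝ) else 0) := by
        rw [ha, hb, ← Finset.sum_add_distrib]
        refine Finset.sum_congr rfl fun ee _ => ?_
        rcases hpairH ee with ⟨h1, h2⟩ | ⟨h1, h2⟩ <;> rw [h1, h2] <;>
          by_cases hx : G.tail (base ee) ∈ X <;> by_cases hy : G.head (base ee) ∈ X <;>
          simp [hx, hy]
      rw [h1, Fintype.sum_sum_type]
      have hinl : (∑ e : G.E, (if ¬(G.tail (base (Sum.inl e)) ∈ X ↔ G.head (base (Sum.inl e)) ∈ X)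
          then (1:ℝ) else 0)) = CGr := by
        rw [hCGr]
        exact Finset.sum_congr rfl fun e _ => by simp only [hbase, Sum.elim_inl, id_eq]
      have hinr : (∑ p : (i : Fin k) × ↥M,
          (if ¬(G.tail (base (Sum.inr p)) ∈ X ↔ G.head (base (Sum.inr p)) ∈ X)
            then (1:ℝ) else 0)) = (k:ℝ) * CMr := by
        rw [← Finset.univ_sigma_univ, Finset.sum_sigma]
        have h6 : ∀ i : Fin k, (∑ e : ↥M,
            (if ¬(G.tail (base (Sum.inr ⟨i, e⟩)) ∈ X ↔ G.head (base (Sum.inr ⟨i, e⟩)) ∈ X)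
              then (1:ℝ) else 0)) = CMr := by
          intro i
          rw [hCMr]
          exact Finset.sum_congr rfl fun e _ => by simp only [hbase, Sum.elim_inr]
        rw [Finset.sum_congr rfl fun i _ => h6 i, Finset.sum_const, Finset.card_univ,
          Fintype.card_fin, nsmul_eq_mul]
      rw [hinl, hinr]
    have hSMBcard : SMB = ((Finset.univ.filter fun v : G.V => v ∈ B ∧ v ∈ X).card : ℝ) := by
      rw [hSMB, Fintype.sum_equiv eB (fun e => if Bnd e.1 ∈ X then (1:ℝ) else 0)
        (fun v => if v.1 ∈ X then (1:ℝ) else 0) (fun e => rfl),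
        ← Finset.sum_subtype (p := fun v : G.V => v ∈ B)
          (Finset.univ.filter fun v : G.V => v ∈ B) (by simp)
          (fun v => if v ∈ X then (1:ℝ) else 0),
        Finset.sum_boole, Finset.filter_filter]
    have hSMWcard : SMW = ((Finset.univ.filter fun v : G.V => v ∈ W ∧ v ∈ X).card : ℝ) := by
      rw [hSMW, Fintype.sum_equiv eW (fun e => if Wnd e.1 ∈ X then (1:ℝ) else 0)
        (fun v => if v.1 ∈ X then (1:ℝ) else 0) (fun e => rfl),
        ← Finset.sum_subtype (p := fun v : G.V => v ∈ W)
          (Finset.univ.filter fun v : G.V => v ∈ W) (by simp)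
          (fun v => if v ∈ X then (1:ℝ) else 0),
        Finset.sum_boole, Finset.filter_filter]
    have hCGrcard : CGr = ((Finset.univ.filter
        fun e : G.E => ¬(G.tail e ∈ X ↔ G.head e ∈ X)).card : ℝ) := by
      rw [hCGr, Finset.sum_boole]
    have hXB : (((↑X ∩ B : Set G.V).ncard : ℕ) : ℝ) = SMB := by
      have hset : (↑X ∩ B : Set G.V) = ↑(Finset.univ.filter fun v : G.V => v ∈ B ∧ v ∈ X) := by
        ext v
        simp [Finset.coe_filter, and_comm]
      rw [hset, Set.ncard_coe_finset, hSMBcard]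
    have hXW : (((↑X ∩ W : Set G.V).ncard : ℕ) : ℝ) = SMW := by
      have hset : (↑X ∩ W : Set G.V) = ↑(Finset.univ.filter fun v : G.V => v ∈ W ∧ v ∈ X) := by
        ext v
        simp [Finset.coe_filter, and_comm]
      rw [hset, Set.ncard_coe_finset, hSMWcard]
    have hXcut : (((G.cut (↑X : Set G.V)).ncard : ℕ) : ℝ) = CGr := by
      have hset : G.cut (↑X : Set G.V)
          = ↑(Finset.univ.filter fun e : G.E => ¬(G.tail e ∈ X ↔ G.head e ∈ X)) := by
        ext e
        simp [Multigraph.cut, Finset.coe_filter]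
      rw [hset, Set.ncard_coe_finset, hCGrcard]
    have hc1 : (r / (r - 2)) * |SMB - SMW| ≤ CGr := by
      have h9 := hcutB (↑X : Set G.V)
      rwa [hXB, hXW, hXcut] at h9
    have hc2 : |SMB - SMW| ≤ CMr := by
      rw [hSMB, hSMW, ← Finset.sum_sub_distrib, hCMr]
      refine le_trans (Finset.abs_sum_le_sum_abs _ _) (Finset.sum_le_sum fun e _ => ?_)
      rcases (hBndM e.1 e.2).2.2 with ⟨h1, h2⟩ | ⟨h1, h2⟩ <;> rw [h1, h2] <;>
        by_cases hx : G.tail e.1 ∈ X <;> by_cases hy : G.head e.1 ∈ X <;>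
        simp [hx, hy]
    have hRHS : (∑ ee : G.E ⊕ ((i : Fin k) × ↥M),
        if etl ee ∈ X ∧ ehd ee ∉ X then (1 + ε) else 0) = (1 + ε) * a := by
      rw [ha, Finset.mul_sum]
      refine Finset.sum_congr rfl fun ee _ => ?_
      by_cases h : etl ee ∈ X ∧ ehd ee ∉ X <;> simp [h]
    rw [hRHS]
    have h3 : (2 + ε) * |SMB - SMW| ≤ ε * (CGr + (k:ℝ) * CMr) := by
      rw [← hkey]
      have h4 : (0:ℝ) ≤ (k:ℝ) := Nat.cast_nonneg k
      have h5 := mul_le_mul_of_nonneg_left hc2 h4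
      calc ε * (r / (r - 2) + (k:ℝ)) * |SMB - SMW|
          = ε * ((r / (r - 2)) * |SMB - SMW| + (k:ℝ) * |SMB - SMW|) := by ring
        _ ≤ ε * (CGr + (k:ℝ) * CMr) := by
            apply mul_le_mul_of_nonneg_left _ hεpos.le
            linarith
    have h5 : (2 + ε) * (-(SMB - SMW)) ≤ ε * (CGr + (k:ℝ) * CMr) :=
      le_trans (mul_le_mul_of_nonneg_left (neg_le_abs _) (by linarith)) h3
    have hgoal : 2 * ((1 + ε) * a - b) = ε * (CGr + (k:ℝ) * CMr) + (2 + ε) * (SMB - SMW) := by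
      linear_combination ε * hC + (2 + ε) * hD
    linarith
  obtain ⟨f, hfbox, hfexc⟩ := NZAux.hoffman etl ehd (fun _ => (1:ℝ)) (fun _ => 1 + ε)
    (fun _ => show (1:ℝ) ≤ 1 + ε by linarith) hcond
  set F : G.E ⊕ ((i : Fin k) × ↥M) → ℝ :=
    fun ee => if etl ee = G.tail (base ee) then f ee else - f ee with hF
  have hbase_tl : ∀ ee, (G.addCopies M k).tail ee = G.tail (base ee) := by
    rintro (e | ⟨i, e⟩) <;> rfl
  have hbase_hd : ∀ ee, (G.addCopies M k).head ee = G.head (base ee) := by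
    rintro (e | ⟨i, e⟩) <;> rfl
  have hflow : (G.addCopies M k).IsNZFlow (2 + ε) F := by
    constructor
    · intro ee
      have h1 : (1:ℝ) ≤ f ee := (hfbox ee).1
      have h2 : f ee ≤ 1 + ε := (hfbox ee).2
      have hFval : F ee = if etl ee = G.tail (base ee) then f ee else - f ee := rfl
      have habs : |F ee| = f ee := by
        rw [hFval]
        split
        · exact abs_of_nonneg (by linarith)
        · rw [abs_neg]; exact abs_of_nonneg (by linarith)
      rw [habs]
      constructor
      · exact h1
      · have : (2:ℝ) + ε - 1 = 1 + ε := by ring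
        rw [this]
        exact h2
    · intro v
      show ∑ᶠ ee ∈ {ee : G.E ⊕ ((i : Fin k) × ↥M) | (G.addCopies M k).tail ee = v}, F ee
          = ∑ᶠ ee ∈ {ee : G.E ⊕ ((i : Fin k) × ↥M) | (G.addCopies M k).head ee = v}, F ee
      have hset1 : {ee : G.E ⊕ ((i : Fin k) × ↥M) | (G.addCopies M k).tail ee = v}
          = ↑(Finset.univ.filter fun ee : G.E ⊕ ((i : Fin k) × ↥M) =>
              (G.addCopies M k).tail ee = v) := by
        ext ee; simp [Finset.coe_filter]
      have hset2 : {ee : G.E ⊕ ((i : Fin k) × ↥M) | (G.addCopies M k).head ee = v}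
          = ↑(Finset.univ.filter fun ee : G.E ⊕ ((i : Fin k) × ↥M) =>
              (G.addCopies M k).head ee = v) := by
        ext ee; simp [Finset.coe_filter]
      rw [hset1, hset2, finsum_mem_coe_finset, finsum_mem_coe_finset]
      have hker := hfexc v
      simp only [NZAux.exc] at hker
      rw [Finset.sum_filter, Finset.sum_filter, ← sub_eq_zero, ← Finset.sum_sub_distrib]
      have hh : ∀ ee : G.E ⊕ ((i : Fin k) × ↥M),
          (if (G.addCopies M k).tail ee = v then F ee else 0)
            - (if (G.addCopies M k).head ee = v then F ee else 0)
          = - (f ee * ((if ehd ee = v then (1:ℝ) else 0) - (if etl ee = v then 1 else 0))) := by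
        intro ee
        rw [hbase_tl ee, hbase_hd ee]
        have hnl := G.no_loop (base ee)
        rcases hpairH ee with ⟨h1, h2⟩ | ⟨h1, h2⟩
        · have hFe : F ee = f ee := by
            have hFval : F ee = if etl ee = G.tail (base ee) then f ee else - f ee := rfl
            rw [hFval, if_pos h1]
          rw [hFe, h1, h2]
          simp only [
            show @Eq (G.addCopies M k).V (G.tail (base ee)) v ↔ G.tail (base ee) = v from Iff.rfl,
            show @Eq (G.addCopies M k).V (G.head (base ee)) v ↔ G.head (base ee) = v from Iff.rfl]
          by_cases hx : G.tail (base ee) = v <;> by_cases hy : G.head (base ee) = v <;>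
            simp [hx, hy] <;> ring
        · have hFe : F ee = - f ee := by
            have hFval : F ee = if etl ee = G.tail (base ee) then f ee else - f ee := rfl
            rw [hFval, if_neg (by rw [h1]; exact fun hC => hnl hC.symm)]
          rw [hFe, h1, h2]
          simp only [
            show @Eq (G.addCopies M k).V (G.tail (base ee)) v ↔ G.tail (base ee) = v from Iff.rfl,
            show @Eq (G.addCopies M k).V (G.head (base ee)) v ↔ G.head (base ee) = v from Iff.rfl]
          by_cases hx : G.tail (base ee) = v <;> by_cases hy : G.head (base ee) = v <;>
            simp [hx, hy] <;> ring <;> rw [if_pos (show @Eq G.V v v from rfl),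
              if_pos (show @Eq G.V v v from rfl)] <;> ring
      rw [Finset.sum_congr rfl fun ee _ => hh ee, Finset.sum_neg_distrib, hker, neg_zero]
  refine ⟨⟨F, hflow⟩, ?_⟩
  apply sInf_le
  exact ⟨2 + ε, rfl, by linarith, ⟨F, hflow⟩⟩
end

section
/- For every integer n ≥ 1, the Flower snark J_{2n+1} admits a nowhere-zero (4 + 1/n)-flow; in particular φ_c(J_{2n+1}) ≤ 4 + 1/n. -/
/-- The Flower snark `J_{2n+1}` (for `n ≥ 1`): vertices `(i, 0) = a_i`,
`(i, 1) = b_i`, `(i, 2) = c_i`, `(i, 3) = d_i` for `i ∈ ℤ_{2n+1}`, and for each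
`i` the six edges `b_i a_i`, `b_i c_i`, `b_i d_i`, `a_i a_{i+1}`, `c_i d_{i+1}`,
`c_{i+1} d_i` (indexed by `(i, j)`, `j ∈ Fin 6`, in this order). -/
noncomputable def flowerSnark (n : ℕ) (hn : 1 ≤ n) : Multigraph where
  V := ZMod (2 * n + 1) × Fin 4
  E := ZMod (2 * n + 1) × Fin 6
  vFinite := by
    haveI : NeZero (2 * n + 1) := ⟨Nat.succ_ne_zero _⟩
    infer_instance
  eFinite := by
    haveI : NeZero (2 * n + 1) := ⟨Nat.succ_ne_zero _⟩
    infer_instance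
  ends := fun e =>
    if e.2 = 0 then ((e.1, 1), (e.1, 0))           -- b_i a_i
    else if e.2 = 1 then ((e.1, 1), (e.1, 2))      -- b_i c_i
    else if e.2 = 2 then ((e.1, 1), (e.1, 3))      -- b_i d_i
    else if e.2 = 3 then ((e.1, 0), (e.1 + 1, 0))  -- a_i a_{i+1}
    else if e.2 = 4 then ((e.1, 2), (e.1 + 1, 3))  -- c_i d_{i+1}
    else ((e.1 + 1, 2), (e.1, 3))                  -- c_{i+1} d_i
  no_loop := by
    haveI : Fact (1 < 2 * n + 1) := ⟨by omega⟩
    rintro ⟨i, j⟩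
    fin_cases j <;> simp [Prod.ext_iff]

/-- Scaled flow values on the flower snark: edge `(i, l)` carries `fval n i.val l / n`. -/
noncomputable def fval (n : ℕ) (q : ℕ) : Fin 6 → ℤ
  | 0 => if q % 2 = 1 ∨ q = 0 then (n : ℤ) else -((n : ℤ) + 1)
  | 1 => if q = 0 then -(2*(n:ℤ)+1) else if q = 1 then -(2*(n:ℤ))
      else if q % 2 = 1 then -(2*(n:ℤ)+1) else -(n:ℤ)
  | 2 => if q = 0 then (n:ℤ)+1 else if q = 1 then (n:ℤ)
      else if q % 2 = 1 then (n:ℤ)+1 else 2*(n:ℤ)+1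
  | 3 => if q % 2 = 0 then -(2*(n:ℤ)+1+((q/2 : ℕ) : ℤ)) else -((n:ℤ)+(((q+1)/2 : ℕ) : ℤ))
  | 4 => if q % 2 = 1 ∨ q ≤ 2 then (n:ℤ) else (n:ℤ) + ((q/2 : ℕ) : ℤ) - 1
  | 5 => if q % 2 = 0 then (if q = 0 then -(3*(n:ℤ)) else -(3*(n:ℤ)+1))
      else -(2*(n:ℤ)-1+(((q+1)/2 : ℕ) : ℤ))

lemma fval_bounds (n q : ℕ) (hn : 1 ≤ n) (hq : q ≤ 2*n) (l : Fin 6) :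
    (n : ℤ) ≤ |fval n q l| ∧ |fval n q l| ≤ 3*n+1 := by
  fin_cases l <;>
    simp only [fval] <;>
    constructor <;> (first | rw [le_abs] | rw [abs_le]) <;> split_ifs <;> omega

lemma cons_a (n q : ℕ) (hn : 1 ≤ n) (hq : q ≤ 2*n) :
    fval n q 3 = fval n q 0 + fval n (if q = 0 then 2*n else q - 1) 3 := by
  simp only [fval]
  split_ifs <;> omega

lemma cons_b (n q : ℕ) :
    fval n q 0 + fval n q 1 + fval n q 2 = 0 := by
  simp only [fval]
  split_ifs <;> omega

lemma cons_c (n q : ℕ) (hn : 1 ≤ n) (hq : q ≤ 2*n) :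
    fval n q 1 = fval n q 4 + fval n (if q = 0 then 2*n else q - 1) 5 := by
  simp only [fval]
  split_ifs <;> omega

lemma cons_d (n q : ℕ) (hn : 1 ≤ n) (hq : q ≤ 2*n) :
    fval n q 2 + fval n (if q = 0 then 2*n else q - 1) 4 + fval n q 5 = 0 := by
  simp only [fval]
  split_ifs <;> omega

lemma valsub (n : ℕ) (hn : 1 ≤ n) (i : ZMod (2*n+1)) :
    (i - 1).val = if i.val = 0 then 2*n else i.val - 1 := by
  haveI : NeZero (2*n+1) := ⟨by omega⟩
  have h2 : i - 1 = i + ((2*n : ℕ) : ZMod (2*n+1)) := by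
    have h0 : ((2*n+1 : ℕ) : ZMod (2*n+1)) = 0 := ZMod.natCast_self _
    push_cast at h0 ⊢
    linear_combination -h0
  rw [h2, ZMod.val_add, ZMod.val_natCast_of_lt (by omega)]
  have hq := ZMod.val_lt i
  split_ifs with h
  · rw [h, Nat.zero_add, Nat.mod_eq_of_lt (by omega)]
  · have he : i.val + 2*n = (i.val - 1) + (2*n+1) := by omega
    rw [he, Nat.add_mod_right, Nat.mod_eq_of_lt (by omega)]

section Sets
variable (n : ℕ) (hn : 1 ≤ n) (i : ZMod (2*n+1))

lemma tail_a : {e : ZMod (2*n+1) × Fin 6 | (flowerSnark n hn).tail e = (i, (0:Fin 4))} = {(i, (3:Fin 6))} := by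
  ext ⟨j, l⟩; fin_cases l <;> simp [flowerSnark, Multigraph.tail, Prod.ext_iff]

lemma head_a : {e : ZMod (2*n+1) × Fin 6 | (flowerSnark n hn).head e = (i, (0:Fin 4))}
    = {(i, (0:Fin 6)), (i-1, (3:Fin 6))} := by
  ext ⟨j, l⟩
  fin_cases l <;> simp [flowerSnark, Multigraph.head, Prod.ext_iff, eq_sub_iff_add_eq]

lemma tail_b : {e : ZMod (2*n+1) × Fin 6 | (flowerSnark n hn).tail e = (i, (1:Fin 4))}
    = {(i, (0:Fin 6)), (i, (1:Fin 6)), (i, (2:Fin 6))} := by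
  ext ⟨j, l⟩; fin_cases l <;> simp [flowerSnark, Multigraph.tail, Prod.ext_iff]

lemma head_b : {e : ZMod (2*n+1) × Fin 6 | (flowerSnark n hn).head e = (i, (1:Fin 4))} = (∅ : Set _) := by
  ext ⟨j, l⟩; fin_cases l <;> simp [flowerSnark, Multigraph.head, Prod.ext_iff]

lemma tail_c : {e : ZMod (2*n+1) × Fin 6 | (flowerSnark n hn).tail e = (i, (2:Fin 4))}
    = {(i, (4:Fin 6)), (i-1, (5:Fin 6))} := by
  ext ⟨j, l⟩
  fin_cases l <;> simp [flowerSnark, Multigraph.tail, Prod.ext_iff, eq_sub_iff_add_eq]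

lemma head_c : {e : ZMod (2*n+1) × Fin 6 | (flowerSnark n hn).head e = (i, (2:Fin 4))} = {(i, (1:Fin 6))} := by
  ext ⟨j, l⟩; fin_cases l <;> simp [flowerSnark, Multigraph.head, Prod.ext_iff]

lemma tail_d : {e : ZMod (2*n+1) × Fin 6 | (flowerSnark n hn).tail e = (i, (3:Fin 4))} = (∅ : Set _) := by
  ext ⟨j, l⟩; fin_cases l <;> simp [flowerSnark, Multigraph.tail, Prod.ext_iff]

lemma head_d : {e : ZMod (2*n+1) × Fin 6 | (flowerSnark n hn).head e = (i, (3:Fin 4))}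
    = {(i, (2:Fin 6)), (i-1, (4:Fin 6)), (i, (5:Fin 6))} := by
  ext ⟨j, l⟩
  fin_cases l <;> simp [flowerSnark, Multigraph.head, Prod.ext_iff, eq_sub_iff_add_eq]

end Sets


/-- for every `n ≥ 1`, the Flower snark `J_{2n+1}` admits a
nowhere-zero `(4 + 1/n)`-flow; in particular `φ_c(J_{2n+1}) ≤ 4 + 1/n`. -/
theorem statement_13 (n : ℕ) (hn : 1 ≤ n) :
    (flowerSnark n hn).HasNZFlow (4 + 1 / (n : ℝ)) ∧
      (flowerSnark n hn).flowNumber ≤ ((4 + 1 / (n : ℝ) : ℝ) : EReal) := by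
  haveI : NeZero (2*n+1) := ⟨by omega⟩
  have hnR : (0:ℝ) < n := by positivity
  set f : (flowerSnark n hn).E → ℝ := fun e => ((fval n e.1.val e.2 : ℤ) : ℝ) / n with hf
  have hval : ∀ i : ZMod (2*n+1), i.val ≤ 2*n := fun i => by
    have := ZMod.val_lt i; omega
  have hflow : (flowerSnark n hn).IsNZFlow (4 + 1/(n:ℝ)) f := by
    constructor
    · rintro ⟨i, l⟩
      obtain ⟨hb1, hb2⟩ := fval_bounds n i.val hn (hval i) l
      have habs : |f (i, l)| = ((|fval n i.val l| : ℤ) : ℝ) / n := by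
        rw [hf]; rw [abs_div, abs_of_pos hnR]; push_cast; ring
      constructor
      · rw [habs, le_div_iff₀ hnR, one_mul]; exact_mod_cast hb1
      · rw [habs, div_le_iff₀ hnR]
        have : ((4:ℝ) + 1/n - 1) * n = 3*n+1 := by field_simp; ring
        rw [this]; exact_mod_cast hb2
    · rintro ⟨i, k⟩
      have hv : (i-1).val = if i.val = 0 then 2*n else i.val - 1 := valsub n hn i
      fin_cases k
      · -- a_i
        show ∑ᶠ e ∈ {e : ZMod (2*n+1) × Fin 6 | (flowerSnark n hn).tail e = (i, (0:Fin 4))}, f e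
            = ∑ᶠ e ∈ {e : ZMod (2*n+1) × Fin 6 | (flowerSnark n hn).head e = (i, (0:Fin 4))}, f e
        rw [tail_a, head_a, finsum_mem_singleton,
          finsum_mem_pair (by simp : ((i, (0:Fin 6)) : ZMod (2*n+1) × Fin 6) ≠ (i-1, (3:Fin 6)))]
        show ((fval n i.val 3 : ℤ) : ℝ)/n = _/n + ((fval n (i-1).val 3 : ℤ) : ℝ)/n
        rw [← add_div]
        congr 1
        rw [hv]
        exact_mod_cast cons_a n i.val hn (hval i)
      · -- b_i
        show ∑ᶠ e ∈ {e : ZMod (2*n+1) × Fin 6 | (flowerSnark n hn).tail e = (i, (1:Fin 4))}, f e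
            = ∑ᶠ e ∈ {e : ZMod (2*n+1) × Fin 6 | (flowerSnark n hn).head e = (i, (1:Fin 4))}, f e
        rw [tail_b, head_b, finsum_mem_empty,
          finsum_mem_insert _ (by simp) (Set.toFinite _),
          finsum_mem_pair (by simp : ((i, (1:Fin 6)) : ZMod (2*n+1) × Fin 6) ≠ (i, (2:Fin 6)))]
        show ((fval n i.val 0 : ℤ) : ℝ)/n + (((fval n i.val 1 : ℤ) : ℝ)/n + _/n) = (0:ℝ)
        rw [← add_div, ← add_div, div_eq_zero_iff]
        left
        have h := cons_b n i.val
        exact_mod_cast (by linarith : fval n i.val 0 + (fval n i.val 1 + fval n i.val 2) = 0)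
      · -- c_i
        show ∑ᶠ e ∈ {e : ZMod (2*n+1) × Fin 6 | (flowerSnark n hn).tail e = (i, (2:Fin 4))}, f e
            = ∑ᶠ e ∈ {e : ZMod (2*n+1) × Fin 6 | (flowerSnark n hn).head e = (i, (2:Fin 4))}, f e
        rw [tail_c, head_c, finsum_mem_singleton,
          finsum_mem_pair (by simp : ((i, (4:Fin 6)) : ZMod (2*n+1) × Fin 6) ≠ (i-1, (5:Fin 6)))]
        show ((fval n i.val 4 : ℤ) : ℝ)/n + ((fval n (i-1).val 5 : ℤ) : ℝ)/n
            = ((fval n i.val 1 : ℤ) : ℝ)/n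
        rw [← add_div]
        congr 1
        rw [hv]
        exact_mod_cast (cons_c n i.val hn (hval i)).symm
      · -- d_i
        show ∑ᶠ e ∈ {e : ZMod (2*n+1) × Fin 6 | (flowerSnark n hn).tail e = (i, (3:Fin 4))}, f e
            = ∑ᶠ e ∈ {e : ZMod (2*n+1) × Fin 6 | (flowerSnark n hn).head e = (i, (3:Fin 4))}, f e
        rw [tail_d, head_d, finsum_mem_empty,
          finsum_mem_insert _ (by simp) (Set.toFinite _),
          finsum_mem_pair (by simp : ((i-1, (4:Fin 6)) : ZMod (2*n+1) × Fin 6) ≠ (i, (5:Fin 6)))]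
        show (0:ℝ) = ((fval n i.val 2 : ℤ) : ℝ)/n + (((fval n (i-1).val 4 : ℤ) : ℝ)/n + _/n)
        rw [← add_div, ← add_div, eq_comm, div_eq_zero_iff]
        left
        rw [hv]
        have h := cons_d n i.val hn (hval i)
        exact_mod_cast (by linarith :
          fval n i.val 2 + (fval n (if i.val = 0 then 2*n else i.val - 1) 4 + fval n i.val 5) = 0)
  refine ⟨⟨f, hflow⟩, ?_⟩
  apply sInf_le
  refine ⟨4 + 1/(n:ℝ), rfl, ?_, f, hflow⟩
  have : (0:ℝ) < 1/n := by positivity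
  linarith
end

section
/- Let P be the Petersen graph, let k ≥ 0 be an integer, and let M_1, …, M_k be perfect matchings of P (not necessarily distinct). Then the multigraph P + Σ_{i=1}^{k} M_i is a (k+3)-regular class 2 graph, i.e., it admits no proper (k+3)-edge-coloring. -/
/-- The Petersen graph: the Kneser graph on the 2-element subsets of a
5-element set, two subsets adjacent iff disjoint.  Each (unordered) edge is
recorded once, ordered by a binary encoding of the subsets. -/
noncomputable def petersen : Multigraph where
  V := {s : Finset (Fin 5) // s.card = 2}
  E := {p : {s : Finset (Fin 5) // s.card = 2} × {s : Finset (Fin 5) // s.card = 2} //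
        Disjoint p.1.1 p.2.1 ∧ (p.1.1.sum fun i => 2 ^ (i : ℕ)) < p.2.1.sum fun i => 2 ^ (i : ℕ)}
  vFinite := by infer_instance
  eFinite := by infer_instance
  ends := fun e => (e.1.1, e.1.2)
  no_loop := fun e h =>
    ne_of_lt e.2.2
      (congrArg (fun s : {s : Finset (Fin 5) // s.card = 2} => s.1.sum fun i => 2 ^ (i : ℕ)) h)

abbrev PV : Type := {s : Finset (Fin 5) // s.card = 2}
abbrev PE : Type := {p : PV × PV //
  Disjoint p.1.1 p.2.1 ∧ (p.1.1.sum fun i => 2 ^ (i : ℕ)) < p.2.1.sum fun i => 2 ^ (i : ℕ)}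

def v01 : PV := ⟨{0,1}, by decide⟩
def v02 : PV := ⟨{0,2}, by decide⟩
def v03 : PV := ⟨{0,3}, by decide⟩
def v04 : PV := ⟨{0,4}, by decide⟩
def v12 : PV := ⟨{1,2}, by decide⟩
def v13 : PV := ⟨{1,3}, by decide⟩
def v14 : PV := ⟨{1,4}, by decide⟩
def v23 : PV := ⟨{2,3}, by decide⟩
def v24 : PV := ⟨{2,4}, by decide⟩
def v34 : PV := ⟨{3,4}, by decide⟩

def pe0 : PE := ⟨(v01, v23), by decide⟩
def pe1 : PE := ⟨(v01, v24), by decide⟩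
def pe2 : PE := ⟨(v01, v34), by decide⟩
def pe3 : PE := ⟨(v02, v13), by decide⟩
def pe4 : PE := ⟨(v02, v14), by decide⟩
def pe5 : PE := ⟨(v02, v34), by decide⟩
def pe6 : PE := ⟨(v03, v14), by decide⟩
def pe7 : PE := ⟨(v03, v24), by decide⟩
def pe8 : PE := ⟨(v12, v03), by decide⟩
def pe9 : PE := ⟨(v12, v04), by decide⟩
def pe10 : PE := ⟨(v12, v34), by decide⟩
def pe11 : PE := ⟨(v13, v04), by decide⟩
def pe12 : PE := ⟨(v13, v24), by decide⟩
def pe13 : PE := ⟨(v23, v04), by decide⟩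
def pe14 : PE := ⟨(v23, v14), by decide⟩

set_option synthInstance.maxSize 1024
set_option maxHeartbeats 2000000

/-- exactly one of three booleans -/
def exOne (x y z : Bool) : Bool := (x && !y && !z) || (!x && y && !z) || (!x && !y && z)

theorem boolKey : ∀ b0 b1 b2 b3 b4 b5 b6 b7 b8 b9 b10 b11 b12 b13 b14 : Bool,
    exOne b0 b1 b2 = true → exOne b3 b4 b5 = true → exOne b6 b7 b8 = true →
    exOne b9 b11 b13 = true → exOne b8 b9 b10 = true → exOne b3 b11 b12 = true →
    exOne b4 b6 b14 = true → exOne b0 b13 b14 = true → exOne b1 b7 b12 = true →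
    exOne b2 b5 b10 = true → (xor b0 (xor b10 b6)) = false := by decide

lemma exOne_mem (M : Set petersen.E) (hM : petersen.IsPerfectMatching M)
    (d : petersen.E → Bool) (hd : ∀ e, d e = true ↔ e ∈ M)
    (v : PV) (a b c : PE)
    (hcomp : ∀ e : PE, (e.1.1 = v ∨ e.1.2 = v) → (e = a ∨ e = b ∨ e = c))
    (ha : a.1.1 = v ∨ a.1.2 = v) (hb : b.1.1 = v ∨ b.1.2 = v) (hc : c.1.1 = v ∨ c.1.2 = v)
    (hab : a ≠ b) (hac : a ≠ c) (hbc : b ≠ c) :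
    exOne (d a) (d b) (d c) = true := by
  obtain ⟨e, ⟨heM, heI⟩, hu⟩ := hM v
  have hnot : ∀ x : PE, (x.1.1 = v ∨ x.1.2 = v) → x ≠ e → d x = false := by
    intro x hxI hxe
    rw [← Bool.not_eq_true, hd x]
    exact fun hxM => hxe (hu x ⟨hxM, hxI⟩)
  have hde : d e = true := (hd e).mpr heM
  have hei : (e : PE).1.1 = v ∨ (e : PE).1.2 = v := heI
  rcases hcomp e hei with he | he | he
  · have da : d a = true := he ▸ hde
    have db : d b = false := hnot b hb (fun hbe => hab (hbe.trans he).symm)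
    have dc : d c = false := hnot c hc (fun hce => hac (hce.trans he).symm)
    simp [exOne, da, db, dc]
  · have db : d b = true := he ▸ hde
    have da : d a = false := hnot a ha (fun hae => hab (hae.trans he))
    have dc : d c = false := hnot c hc (fun hce => hbc (hce.trans he).symm)
    simp [exOne, da, db, dc]
  · have dc : d c = true := he ▸ hde
    have da : d a = false := hnot a ha (fun hae => hac (hae.trans he))
    have db : d b = false := hnot b hb (fun hbe => hbc (hbe.trans he))
    simp [exOne, da, db, dc]

/-- Triple parity: every perfect matching of the Petersen graph contains an even
number of the three edges `pe0, pe10, pe6`. -/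
lemma pm_parity (M : Set petersen.E) (hM : petersen.IsPerfectMatching M)
    (d : petersen.E → Bool) (hd : ∀ e, d e = true ↔ e ∈ M) :
    ((d pe0).toNat + (d pe10).toNat + (d pe6).toNat) % 2 = 0 := by
  have h0 := exOne_mem M hM d hd v01 pe0 pe1 pe2 (by decide) (by decide) (by decide) (by decide)
    (by decide) (by decide) (by decide)
  have h1 := exOne_mem M hM d hd v02 pe3 pe4 pe5 (by decide) (by decide) (by decide) (by decide)
    (by decide) (by decide) (by decide)
  have h2 := exOne_mem M hM d hd v03 pe6 pe7 pe8 (by decide) (by decide) (by decide) (by decide)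
    (by decide) (by decide) (by decide)
  have h3 := exOne_mem M hM d hd v04 pe9 pe11 pe13 (by decide) (by decide) (by decide) (by decide)
    (by decide) (by decide) (by decide)
  have h4 := exOne_mem M hM d hd v12 pe8 pe9 pe10 (by decide) (by decide) (by decide) (by decide)
    (by decide) (by decide) (by decide)
  have h5 := exOne_mem M hM d hd v13 pe3 pe11 pe12 (by decide) (by decide) (by decide) (by decide)
    (by decide) (by decide) (by decide)
  have h6 := exOne_mem M hM d hd v14 pe4 pe6 pe14 (by decide) (by decide) (by decide) (by decide)
    (by decide) (by decide) (by decide)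
  have h7 := exOne_mem M hM d hd v23 pe0 pe13 pe14 (by decide) (by decide) (by decide) (by decide)
    (by decide) (by decide) (by decide)
  have h8 := exOne_mem M hM d hd v24 pe1 pe7 pe12 (by decide) (by decide) (by decide) (by decide)
    (by decide) (by decide) (by decide)
  have h9 := exOne_mem M hM d hd v34 pe2 pe5 pe10 (by decide) (by decide) (by decide) (by decide)
    (by decide) (by decide) (by decide)
  have hx : xor (d pe0) (xor (d pe10) (d pe6)) = false :=
    boolKey (d pe0) (d pe1) (d pe2) (d pe3) (d pe4) (d pe5) (d pe6) (d pe7) (d pe8) (d pe9)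
      (d pe10) (d pe11) (d pe12) (d pe13) (d pe14) h0 h1 h2 h3 h4 h5 h6 h7 h8 h9
  revert hx
  cases d pe0 <;> cases d pe10 <;> cases d pe6 <;> decide

lemma pet_deg' : ∀ v : PV, Nat.card {e : PE // e.1.1 = v ∨ e.1.2 = v} = 3 := by
  intro v; rw [Nat.card_eq_fintype_card]; revert v; decide

lemma pet_deg (v : petersen.V) : petersen.degree v = 3 := pet_deg' v

/-- subtype of a sigma type by a fiberwise predicate -/
def sigmaSubtypeEquiv {ι : Type} {γ : ι → Type} (p : ∀ i, γ i → Prop) :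
    {y : Σ i, γ i // p y.1 y.2} ≃ Σ i, {c : γ i // p i c} where
  toFun x := ⟨x.1.1, x.1.2, x.2⟩
  invFun x := ⟨⟨x.1, x.2.1⟩, x.2.2⟩
  left_inv := by rintro ⟨⟨i, c⟩, h⟩; rfl
  right_inv := by rintro ⟨i, c, h⟩; rfl

lemma nat_card_sigma {k : ℕ} (A : Fin k → Type) [∀ i, Finite (A i)] :
    Nat.card (Σ i, A i) = ∑ i, Nat.card (A i) := by
  haveI := fun i => Fintype.ofFinite (A i)
  rw [Nat.card_eq_fintype_card, Fintype.card_sigma]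
  exact Finset.sum_congr rfl fun i _ => Nat.card_eq_fintype_card.symm

lemma sum_toNat_eq_card {n : ℕ} (p : Fin n → Prop) (d : Fin n → Bool)
    (hd : ∀ j, d j = true ↔ p j) :
    (∑ j, (d j).toNat) = Nat.card {j : Fin n // p j} := by
  have h1 : Nat.card {j : Fin n // p j} = Nat.card {j : Fin n // d j = true} :=
    Nat.card_congr (Equiv.subtypeEquivRight fun j => (hd j).symm)
  rw [h1, Nat.card_eq_fintype_card, Fintype.card_subtype, Finset.card_filter]
  exact Finset.sum_congr rfl fun j _ => by cases hj : d j <;> simp [hj]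

section AddFam

variable {k : ℕ} (M : Fin k → Set petersen.E)

/-- the edge type of `petersen.addEdgeFamily M`, unfolded -/
abbrev ESum := petersen.E ⊕ ((i : Fin k) × ↥(M i))

/-- projection to the underlying Petersen edge -/
def projE : ESum M → petersen.E := Sum.elim id (fun p => p.2.1)

lemma inc_addE (v : petersen.V) (a : ESum M) :
    (petersen.addEdgeFamily M).Inc v a ↔ petersen.Inc v (projE M a) := by
  cases a <;> exact Iff.rfl

lemma tail_addE (a : ESum M) :
    (petersen.addEdgeFamily M).tail a = petersen.tail (projE M a) := by
  cases a <;> rfl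

lemma eadj_addE (v : petersen.V) (a a' : ESum M) (hne : a ≠ a')
    (h1 : petersen.Inc v (projE M a)) (h2 : petersen.Inc v (projE M a')) :
    (petersen.addEdgeFamily M).EAdj a a' :=
  ⟨hne, v, (inc_addE M v a).mpr h1, (inc_addE M v a').mpr h2⟩

lemma card_fiber_inc (i : Fin k) (hM : petersen.IsPerfectMatching (M i)) (v : petersen.V) :
    Nat.card {x : ↥(M i) // petersen.Inc v ↑x} = 1 := by
  obtain ⟨e, he, hu⟩ := hM v
  rw [Nat.card_eq_one_iff_unique]
  constructor
  · constructor
    rintro ⟨⟨x, hxM⟩, hxI⟩ ⟨⟨y, hyM⟩, hyI⟩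
    have : x = y := (hu x ⟨hxM, hxI⟩).trans (hu y ⟨hyM, hyI⟩).symm
    subst this; rfl
  · exact ⟨⟨⟨e, he.1⟩, he.2⟩⟩

lemma card_fiber_eq (i : Fin k) (d : petersen.E → Bool) (hd : ∀ e, d e = true ↔ e ∈ M i)
    (e : petersen.E) :
    Nat.card {x : ↥(M i) // (x : petersen.E) = e} = (d e).toNat := by
  by_cases h : e ∈ M i
  · have hc : Nat.card {x : ↥(M i) // (x : petersen.E) = e} = 1 := by
      rw [Nat.card_eq_one_iff_unique]
      refine ⟨⟨fun x y => ?_⟩, ⟨⟨⟨e, h⟩, rfl⟩⟩⟩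
      obtain ⟨⟨x, hx⟩, hx'⟩ := x; obtain ⟨⟨y, hy⟩, hy'⟩ := y
      cases hx'; cases hy'; rfl
    rw [hc, (hd e).mpr h]; rfl
  · have hde : d e = false := by rw [← Bool.not_eq_true, hd e]; exact h
    haveI : IsEmpty {x : ↥(M i) // (x : petersen.E) = e} :=
      ⟨fun x => h (x.2 ▸ x.1.2)⟩
    rw [hde, Nat.card_of_isEmpty]; rfl

lemma regular_addE (hM : ∀ i, petersen.IsPerfectMatching (M i)) :
    (petersen.addEdgeFamily M).IsRegular (k + 3) := by
  intro v
  show Nat.card {a : ESum M // (petersen.addEdgeFamily M).Inc v a} = k + 3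
  have e1 : {a : ESum M // (petersen.addEdgeFamily M).Inc v a} ≃
      {a : ESum M // petersen.Inc v (projE M a)} :=
    Equiv.subtypeEquivRight fun a => inc_addE M v a
  have e2 : {a : ESum M // petersen.Inc v (projE M a)} ≃
      {e : petersen.E // petersen.Inc v e} ⊕
        {p : (i : Fin k) × ↥(M i) // petersen.Inc v p.2.1} :=
    Equiv.subtypeSum
  have e3 : {p : (i : Fin k) × ↥(M i) // petersen.Inc v p.2.1} ≃
      Σ i, {x : ↥(M i) // petersen.Inc v ↑x} :=
    sigmaSubtypeEquiv (γ := fun i : Fin k => ↥(M i)) (fun i x => petersen.Inc v ↑x)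
  rw [Nat.card_congr (e1.trans e2), Nat.card_sum, Nat.card_congr e3, nat_card_sigma]
  have : ∀ i : Fin k, Nat.card {x : ↥(M i) // petersen.Inc v ↑x} = 1 :=
    fun i => card_fiber_inc M i (hM i) v
  rw [Finset.sum_congr rfl fun i _ => this i]
  have h3 : Nat.card {e : petersen.E // petersen.Inc v e} = 3 := pet_deg v
  rw [h3]
  simp
  omega

lemma card_parallel (d : Fin k → petersen.E → Bool)
    (hd : ∀ i e, d i e = true ↔ e ∈ M i) (e : petersen.E) :
    Nat.card {a : ESum M // projE M a = e} = 1 + ∑ i, (d i e).toNat := by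
  have e2 : {a : ESum M // projE M a = e} ≃
      {x : petersen.E // x = e} ⊕ {p : (i : Fin k) × ↥(M i) // (p.2.1 : petersen.E) = e} :=
    Equiv.subtypeSum
  have e3 : {p : (i : Fin k) × ↥(M i) // (p.2.1 : petersen.E) = e} ≃
      Σ i, {x : ↥(M i) // (x : petersen.E) = e} :=
    sigmaSubtypeEquiv (γ := fun i : Fin k => ↥(M i)) (fun i x => (x : petersen.E) = e)
  rw [Nat.card_congr e2, Nat.card_sum, Nat.card_congr e3, nat_card_sigma]
  have h1 : Nat.card {x : petersen.E // x = e} = 1 := by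
    rw [Nat.card_eq_one_iff_unique]
    exact ⟨⟨fun x y => Subtype.ext (x.2.trans y.2.symm)⟩, ⟨⟨e, rfl⟩⟩⟩
  rw [h1, Finset.sum_congr rfl fun i _ => card_fiber_eq M i (d i) (hd i) e]

end AddFam

/-- for every `k ≥ 0` and all perfect matchings `M_1, …, M_k` of
the Petersen graph `P` (not necessarily distinct), the multigraph
`P + Σ_{i=1}^k M_i` is a `(k+3)`-regular class 2 graph, i.e. it admits no
proper `(k+3)`-edge-coloring. -/
theorem statement_15 (k : ℕ) (M : Fin k → Set petersen.E)
    (hM : ∀ i, petersen.IsPerfectMatching (M i)) :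
    (petersen.addEdgeFamily M).IsRegular (k + 3) ∧
      (petersen.addEdgeFamily M).IsClass2 ∧
      ¬ ∃ c : (petersen.addEdgeFamily M).E → Fin (k + 3),
          (petersen.addEdgeFamily M).IsProperEdgeColoring c := by
  classical
  have hreg : (petersen.addEdgeFamily M).IsRegular (k + 3) := regular_addE M hM
  have noC : ¬ ∃ c : (petersen.addEdgeFamily M).E → Fin (k + 3),
      (petersen.addEdgeFamily M).IsProperEdgeColoring c := by
    rintro ⟨c, hc⟩
    -- the projected color classes
    set N : Fin (k + 3) → Set petersen.E :=
      fun j => {e | ∃ a : ESum M, projE M a = e ∧ c a = j} with hNdef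
    have hNpm : ∀ j, petersen.IsPerfectMatching (N j) := by
      intro j v
      haveI : Fintype {a : ESum M // (petersen.addEdgeFamily M).Inc v a} :=
        @Fintype.ofFinite _ (by haveI : Finite (ESum M) := (petersen.addEdgeFamily M).eFinite; exact Subtype.finite)
      have hinj : Function.Injective
          (fun a : {a : ESum M // (petersen.addEdgeFamily M).Inc v a} => c a.1) := by
        intro a a' h
        by_contra hne
        exact hc a.1 a'.1 ⟨fun h' => hne (Subtype.ext h'), v, a.2, a'.2⟩ h
      have hcard : Fintype.card {a : ESum M // (petersen.addEdgeFamily M).Inc v a} =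
          Fintype.card (Fin (k + 3)) := by
        rw [← Nat.card_eq_fintype_card, Fintype.card_fin]
        exact hreg v
      have hsurj := ((Fintype.bijective_iff_injective_and_card _).mpr ⟨hinj, hcard⟩).2
      obtain ⟨a, haj⟩ := hsurj j
      refine ⟨projE M a.1, ⟨⟨a.1, rfl, haj⟩, (inc_addE M v a.1).mp a.2⟩, ?_⟩
      rintro e' ⟨⟨a', ha'p, ha'j⟩, ha'I⟩
      have hIa' : (petersen.addEdgeFamily M).Inc v a' :=
        (inc_addE M v a').mpr (by rw [ha'p]; exact ha'I)
      by_cases heq : a' = a.1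
      · rw [← ha'p, heq]
      · exact absurd (ha'j.trans haj.symm) (hc a' a.1 ⟨heq, v, hIa', a.2⟩)
    -- boolean membership functions
    set dM : Fin k → petersen.E → Bool := fun i e => decide (e ∈ M i) with hdMdef
    have hdM : ∀ i e, dM i e = true ↔ e ∈ M i := fun i e => by simp [hdMdef]
    set dN : Fin (k + 3) → petersen.E → Bool := fun j e => decide (e ∈ N j) with hdNdef
    have hdN : ∀ j e, dN j e = true ↔ e ∈ N j := fun j e => by simp [hdNdef]
    -- per-edge counting
    have hcount : ∀ e : petersen.E, (∑ j, (dN j e).toNat) = 1 + ∑ i, (dM i e).toNat := by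
      intro e
      rw [sum_toNat_eq_card (fun j => e ∈ N j) (fun j => dN j e) (fun j => hdN j e),
        ← card_parallel M dM hdM e]
      refine Nat.card_congr (Equiv.ofBijective
        (fun a : {a : ESum M // projE M a = e} => (⟨c a.1, ⟨a.1, a.2, rfl⟩⟩ : {j // e ∈ N j}))
        ⟨?_, ?_⟩).symm
      · intro a a' h
        by_contra hne
        have hne' : a.1 ≠ a'.1 := fun h' => hne (Subtype.ext h')
        have h1 : petersen.Inc (petersen.tail e) (projE M a.1) := by rw [a.2]; exact Or.inl rfl
        have h2 : petersen.Inc (petersen.tail e) (projE M a'.1) := by rw [a'.2]; exact Or.inl rfl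
        exact hc a.1 a'.1 (eadj_addE M (petersen.tail e) a.1 a'.1 hne' h1 h2)
          (congrArg Subtype.val h)
      · rintro ⟨j, a, hap, haj⟩
        exact ⟨⟨a, hap⟩, Subtype.ext haj⟩
    -- parity contradiction
    have hS0 : (∑ j : Fin (k + 3),
        ((dN j pe0).toNat + (dN j pe10).toNat + (dN j pe6).toNat)) % 2 = 0 := by
      rw [Finset.sum_nat_mod]
      have : ∀ j ∈ Finset.univ, ((dN j pe0).toNat + (dN j pe10).toNat + (dN j pe6).toNat) % 2
          = 0 := fun j _ => pm_parity (N j) (hNpm j) (dN j) (hdN j)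
      rw [Finset.sum_congr rfl this]
      simp
    have hR0 : (∑ i : Fin k,
        ((dM i pe0).toNat + (dM i pe10).toNat + (dM i pe6).toNat)) % 2 = 0 := by
      rw [Finset.sum_nat_mod]
      have : ∀ i ∈ Finset.univ, ((dM i pe0).toNat + (dM i pe10).toNat + (dM i pe6).toNat) % 2
          = 0 := fun i _ => pm_parity (M i) (hM i) (dM i) (hdM i)
      rw [Finset.sum_congr rfl this]
      simp
    have hSsplit : (∑ j : Fin (k + 3),
        ((dN j pe0).toNat + (dN j pe10).toNat + (dN j pe6).toNat)) =
        (∑ j, (dN j pe0).toNat) + (∑ j, (dN j pe10).toNat) + (∑ j, (dN j pe6).toNat) := by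
      rw [Finset.sum_add_distrib, Finset.sum_add_distrib]
    have hRsplit : (∑ i : Fin k,
        ((dM i pe0).toNat + (dM i pe10).toNat + (dM i pe6).toNat)) =
        (∑ i, (dM i pe0).toNat) + (∑ i, (dM i pe10).toNat) + (∑ i, (dM i pe6).toNat) := by
      rw [Finset.sum_add_distrib, Finset.sum_add_distrib]
    have h1 := hcount pe0
    have h2 := hcount pe10
    have h3 := hcount pe6
    omega
  haveI : Nonempty (petersen.addEdgeFamily M).V := ⟨v01⟩
  have hmax : (petersen.addEdgeFamily M).maxDegree = k + 3 := by
    unfold Multigraph.maxDegree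
    rw [show (petersen.addEdgeFamily M).degree = fun _ => (k + 3) from funext hreg,
      Set.range_const, csSup_singleton]
  refine ⟨hreg, ?_, noC⟩
  unfold Multigraph.IsClass2 Multigraph.IsClass1
  intro h
  rw [hmax] at h
  unfold Multigraph.chromaticIndex at h
  rcases Set.eq_empty_or_nonempty {n | ∃ c : (petersen.addEdgeFamily M).E → Fin n,
      (petersen.addEdgeFamily M).IsProperEdgeColoring c} with hS | hS
  · rw [hS, Nat.sInf_empty] at h
    omega
  · have hmem := Nat.sInf_mem hS
    rw [h] at hmem
    exact noC hmem
end

section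
/- Let n ≥ 1 and let e_1, e_2, …, e_{2n+1} be the edges of the cycle C_{2n+1} listed in cyclic order (so e_i and e_{i+1} are adjacent, indices modulo 2n+1). Let c : {e_1, …, e_{2n+1}} → {1, 2, 3} be a coloring such that there are no cyclically consecutive edges e_i, e_{i+1} with c(e_i) = c(e_{i+1}) = 3 and no cyclically consecutive edges e_i, e_{i+1} with {c(e_i), c(e_{i+1})} = {1, 2}. Then there exists an index j such that c(e_j) = c(e_{j+2}) (indices modulo 2n+1). -/
/-- if the edges `e_1, …, e_{2n+1}` of an odd cycle (indexed
cyclically by `ZMod (2n+1)`) are colored with colors `1, 2, 3` so that no two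
cyclically consecutive edges both get color `3`, and no two cyclically
consecutive edges get the two colors `1` and `2`, then some two edges at
cyclic distance two get the same color. -/
theorem statement_17 (n : ℕ) (hn : 1 ≤ n) (c : ZMod (2 * n + 1) → ℕ)
    (hrange : ∀ i, c i ∈ ({1, 2, 3} : Set ℕ))
    (h3 : ∀ i, ¬ (c i = 3 ∧ c (i + 1) = 3))
    (h12 : ∀ i, ¬ ((c i = 1 ∧ c (i + 1) = 2) ∨ (c i = 2 ∧ c (i + 1) = 1))) :
    ∃ j : ZMod (2 * n + 1), c j = c (j + 2) := by
  by_contra hcon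
  push_neg at hcon
  have eq3 : ∀ j : ZMod (2 * n + 1), c j ≠ 3 → c (j + 1) ≠ 3 → c (j + 1) = c j := by
    intro j hj hj1
    have r0 := hrange j
    have r1 := hrange (j + 1)
    have h := h12 j
    simp only [Set.mem_insert_iff, Set.mem_singleton_iff] at r0 r1
    omega
  by_cases hB : ∀ j : ZMod (2 * n + 1), c j = 3 ∨ c (j + 1) = 3
  · obtain hc | hc := hB 0
    · have h1 : c (0 + 1) ≠ 3 := fun h => h3 0 ⟨hc, h⟩
      have h2 := (hB (0 + 1)).resolve_left h1
      exact hcon 0 (by rw [hc, show (0 : ZMod (2 * n + 1)) + 2 = 0 + 1 + 1 by ring]; exact h2.symm)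
    · have h2 : c (0 + 1 + 1) ≠ 3 := fun h => h3 (0 + 1) ⟨hc, h⟩
      have h4 := (hB (0 + 1 + 1)).resolve_left h2
      exact hcon (0 + 1) (by
        rw [hc, show (0 : ZMod (2 * n + 1)) + 1 + 2 = 0 + 1 + 1 + 1 by ring]; exact h4.symm)
  · push_neg at hB
    obtain ⟨i, hi, hi1⟩ := hB
    have hbase : c (i + 1) = c i := eq3 i hi hi1
    have step : ∀ j : ZMod (2 * n + 1), c j ≠ 3 → c (j + 1) = c j →
        (c (j + 3) ≠ 3 ∧ c (j + 3 + 1) = c (j + 3) ∧ c (j + 3) ≠ c j) := by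
      intro j hj hj1
      have h2 : c (j + 2) = 3 := by
        by_contra h2
        have heq : c (j + 1 + 1) = c (j + 1) :=
          eq3 (j + 1) (hj1 ▸ hj) (by rwa [show j + 1 + 1 = j + 2 by ring])
        exact hcon j (by rw [show j + 2 = j + 1 + 1 by ring, heq, hj1])
      have h33 : c (j + 3) ≠ 3 := by
        intro h
        exact h3 (j + 2) ⟨h2, by rwa [show j + 2 + 1 = j + 3 by ring]⟩
      have hne : c (j + 3) ≠ c j := by
        have h := hcon (j + 1)
        rw [hj1, show j + 1 + 2 = j + 3 by ring] at h
        exact fun he => h he.symm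
      have h4 : c (j + 3 + 1) = c (j + 3) := by
        apply eq3 (j + 3) h33
        intro h
        exact hcon (j + 2) (by rw [h2, show j + 2 + 2 = j + 3 + 1 by ring, h])
      exact ⟨h33, h4, hne⟩
    have main : ∀ k : ℕ, (c (i + 3 * k) ≠ 3 ∧ c (i + 3 * k + 1) = c (i + 3 * k)) ∧
        (c (i + 3 * k) = c i ↔ Even k) := by
      intro k
      induction k with
      | zero => constructor <;> simp [hi, hbase]
      | succ k ih =>
        obtain ⟨⟨hk3, hk1⟩, hkiff⟩ := ih
        obtain ⟨s3, s1, sne⟩ := step (i + 3 * k) hk3 hk1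
        have hcast : (i + 3 * ((k : ℕ) + 1 : ℕ) : ZMod (2 * n + 1)) = i + 3 * k + 3 := by
          push_cast
          ring
        refine ⟨⟨by rw [hcast]; exact s3, by rw [hcast]; exact s1⟩, ?_⟩
        rw [hcast, Nat.even_add_one, ← hkiff]
        have ri := hrange i
        have rk := hrange (i + 3 * k)
        have rk3 := hrange (i + 3 * k + 3)
        simp only [Set.mem_insert_iff, Set.mem_singleton_iff] at ri rk rk3
        omega
    have h := (main (2 * n + 1)).2
    rw [ZMod.natCast_self, mul_zero, add_zero] at h
    have he : Even (2 * n + 1) := h.mp rfl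
    exact (Nat.even_add_one.mp he) (even_two_mul n)
end
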